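/- arXiv:2309.00976 — 6 statements merged into one kernel-verified Lean document; each statement's English description precedes it below -/
import Mathlib

section
/- Let G = (V,E) be a finite simple undirected graph and let u, v ∈ V be distinct non-adjacent vertices. On a probability space, let X : V → ℝ^F be a random matrix whose entries X_{k,i} are jointly independent with mean 0, variance σ_node², and let W be a random F′ × F matrix, independent of X, whose entries are jointly independent with mean 0, variance σ_weight². Define the 1-layer GCN output h_w = W · Σ_{k ∈ N(w) ∪ {w}} (1/√(d̂_k d̂_w)) X_k for each vertex w, where d̂_w = d_w + 1. Then the expected inner product satisfies E[h_u · h_v] = (C / √(d̂_u d̂_v)) · Σ_{k ∈ N(u) ∩ N(v)} 1/d̂_k, where C = σ_node² σ_weight² F F′. -/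
open MeasureTheory ProbabilityTheory


section AuxLemmas

variable {Ω : Type*} [MeasureSpace Ω] [IsProbabilityMeasure (ℙ : Measure Ω)]

/-- AM–GM style integrability of a product from integrability of squares. -/
lemma aux_integrable_mul_of_sq {f g : Ω → ℝ} (hf : Measurable f) (hg : Measurable g)
    (hf2 : Integrable (fun ω => f ω ^ 2)) (hg2 : Integrable (fun ω => g ω ^ 2)) :
    Integrable (fun ω => f ω * g ω) := by
  refine Integrable.mono' ((hf2.add hg2).const_mul (1/2)) (hf.mul hg).aestronglyMeasurable ?_
  filter_upwards with ω
  simp only [Pi.add_apply]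
  rw [Real.norm_eq_abs, abs_mul]
  nlinarith [sq_nonneg (|f ω| - |g ω|), sq_abs (f ω), sq_abs (g ω), abs_nonneg (f ω),
    abs_nonneg (g ω)]

/-- If all entries of an independent family have (Bochner) mean zero and (Bochner) second moment
zero, then any quadratic form in the entries which happens to be integrable has integral zero. -/
lemma aux_quad_sum_integral_zero {ι : Type*} [DecidableEq ι]
    (ξ : ι → Ω → ℝ) (hmeas : ∀ i, Measurable (ξ i))
    (hindep : iIndepFun ξ ℙ)
    (hmean : ∀ i, ∫ ω, ξ i ω = 0)
    (hvar : ∀ i, ∫ ω, (ξ i ω) ^ 2 = 0)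
    (M : ι → ι → ℝ) :
    ∀ (s : Finset ι),
      Integrable (fun ω => ∑ i ∈ s, ∑ i' ∈ s, M i i' * (ξ i ω * ξ i' ω)) →
      ∫ ω, ∑ i ∈ s, ∑ i' ∈ s, M i i' * (ξ i ω * ξ i' ω) = 0 := by
  intro s
  induction s using Finset.induction_on with
  | empty => intro _; simp
  | @insert a s' ha IH =>
    intro hq
    set A : ℝ := M a a with hAdef
    set B : Ω → ℝ := fun ω => ∑ i ∈ s', (M a i + M i a) * ξ i ω with hBdef
    set C : Ω → ℝ := fun ω => ∑ i ∈ s', ∑ i' ∈ s', M i i' * (ξ i ω * ξ i' ω) with hCdef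
    have hdecomp : ∀ ω, (∑ i ∈ insert a s', ∑ i' ∈ insert a s', M i i' * (ξ i ω * ξ i' ω))
        = A * ξ a ω ^ 2 + B ω * ξ a ω + C ω := by
      intro ω
      have e1 : B ω * ξ a ω
          = (∑ i ∈ s', M a i * (ξ a ω * ξ i ω)) + ∑ i ∈ s', M i a * (ξ i ω * ξ a ω) := by
        rw [hBdef]
        rw [Finset.sum_mul, ← Finset.sum_add_distrib]
        exact Finset.sum_congr rfl fun i _ => by ring
      simp only [Finset.sum_insert ha]
      rw [Finset.sum_add_distrib, e1]
      ring
    have hfun : (fun ω => ∑ i ∈ insert a s', ∑ i' ∈ insert a s', M i i' * (ξ i ω * ξ i' ω))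
        = fun ω => A * ξ a ω ^ 2 + B ω * ξ a ω + C ω := funext hdecomp
    by_cases hsq : Integrable (fun ω => ξ a ω ^ 2)
    · -- then `ξ a = 0` a.e.
      have h0 : (fun ω => ξ a ω ^ 2) =ᵐ[ℙ] 0 :=
        (integral_eq_zero_iff_of_nonneg_ae (ae_of_all _ fun ω => sq_nonneg _) hsq).mp (hvar a)
      have hξ0 : ∀ᵐ ω ∂ℙ, ξ a ω = 0 := by
        filter_upwards [h0] with ω hω
        exact pow_eq_zero_iff two_ne_zero |>.mp hω
      have hqC : (fun ω => ∑ i ∈ insert a s', ∑ i' ∈ insert a s', M i i' * (ξ i ω * ξ i' ω))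
          =ᵐ[ℙ] C := by
        filter_upwards [hξ0] with ω hω
        rw [hdecomp ω, hω]; ring
      rw [integral_congr_ae hqC]
      exact IH (hq.congr hqC)
    · -- `ξ a` is "heavy": its square is not integrable
      set R : Ω → ℝ × ℝ := fun ω => (B ω, C ω) with hRdef
      have hBmeas : Measurable B :=
        Finset.measurable_sum _ fun i _ => (hmeas i).const_mul _
      have hCmeas : Measurable C :=
        Finset.measurable_sum _ fun i _ =>
          Finset.measurable_sum _ fun i' _ => ((hmeas i).mul (hmeas i')).const_mul _
      have hRmeas : Measurable R := hBmeas.prodMk hCmeas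
      -- independence of `ξ a` and `R`
      have hindBC : IndepFun (ξ a) R ℙ := by
        have h1 := hindep.indepFun_finset {a} s'
          (Finset.disjoint_singleton_left.mpr ha) hmeas
        have hφm : Measurable fun v : ({a} : Finset ι) → ℝ =>
            v ⟨a, Finset.mem_singleton_self a⟩ := measurable_pi_apply _
        have hψm : Measurable fun v : ↥s' → ℝ =>
            ((∑ i : ↥s', (M a i.1 + M i.1 a) * v i,
              ∑ i : ↥s', ∑ i' : ↥s', M i.1 i'.1 * (v i * v i')) : ℝ × ℝ) := by
          refine Measurable.prodMk ?_ ?_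
          · exact Finset.measurable_sum _ fun i _ => (measurable_pi_apply i).const_mul _
          · exact Finset.measurable_sum _ fun i _ => Finset.measurable_sum _ fun i' _ =>
              (((measurable_pi_apply i).mul (measurable_pi_apply i')).const_mul _)
        have h2 := h1.comp hφm hψm
        have he : (fun ω => ((∑ i : ↥s', (M a i.1 + M i.1 a) * ξ i.1 ω,
            ∑ i : ↥s', ∑ i' : ↥s',
              M i.1 i'.1 * (ξ i.1 ω * ξ i'.1 ω)) : ℝ × ℝ)) = R := by
          funext ω
          rw [hRdef]
          refine Prod.ext ?_ ?_
          · simpa using Finset.sum_coe_sort s' (fun i => (M a i + M i a) * ξ i ω)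
          · show (∑ i : ↥s', ∑ i' : ↥s',
                M i.1 i'.1 * (ξ i.1 ω * ξ i'.1 ω)) = C ω
            rw [hCdef]
            calc ∑ i : ↥s', ∑ i' : ↥s',
                  M i.1 i'.1 * (ξ i.1 ω * ξ i'.1 ω)
                = ∑ i : ↥s', ∑ i' ∈ s', M i.1 i' * (ξ i.1 ω * ξ i' ω) :=
                  Finset.sum_congr rfl fun i _ =>
                    Finset.sum_coe_sort s' (fun j => M i.1 j * (ξ i.1 ω * ξ j ω))
              _ = ∑ i ∈ s', ∑ i' ∈ s', M i i' * (ξ i ω * ξ i' ω) :=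
                  Finset.sum_coe_sort s' (fun j => ∑ i' ∈ s', M j i' * (ξ j ω * ξ i' ω))
        rw [← he]
        exact h2
      set μξ : Measure ℝ := Measure.map (ξ a) ℙ with hμξ
      set μR : Measure (ℝ × ℝ) := Measure.map R ℙ with hμR
      haveI : IsProbabilityMeasure μξ := Measure.isProbabilityMeasure_map (hmeas a).aemeasurable
      haveI : IsProbabilityMeasure μR := Measure.isProbabilityMeasure_map hRmeas.aemeasurable
      haveI : (ae μξ).NeBot := IsProbabilityMeasure.ae_neBot
      haveI : (ae μR).NeBot := IsProbabilityMeasure.ae_neBot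
      set g : ℝ × (ℝ × ℝ) → ℝ := fun p => A * p.1 ^ 2 + p.2.1 * p.1 + p.2.2 with hgdef
      have hgm : Measurable g := by
        apply Measurable.add
        apply Measurable.add
        · exact (measurable_fst.pow_const 2).const_mul A
        · exact (measurable_fst.comp measurable_snd).mul measurable_fst
        · exact measurable_snd.comp measurable_snd
      have hmap : Measure.map (fun ω => (ξ a ω, R ω)) ℙ = μξ.prod μR :=
        (indepFun_iff_map_prod_eq_prod_map_map (hmeas a).aemeasurable
          hRmeas.aemeasurable).mp hindBC
      have hqg : Integrable (fun ω => g (ξ a ω, R ω)) := by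
        have := hq
        rw [hfun] at this
        exact this
      have hgint : Integrable g (μξ.prod μR) := by
        rw [← hmap]
        exact (integrable_map_measure hgm.aestronglyMeasurable
          ((hmeas a).prodMk hRmeas).aemeasurable).mpr hqg
      have hsq' : ¬ Integrable (fun t : ℝ => t ^ 2) μξ := by
        intro hcon
        exact hsq ((integrable_map_measure
          ((by fun_prop : Measurable fun t : ℝ => t ^ 2).aestronglyMeasurable)
          (hmeas a).aemeasurable).mp hcon)
      have hslR : ∀ᵐ r ∂μR, Integrable (fun t => g (t, r)) μξ := hgint.prod_left_ae
      have hslξ : ∀ᵐ t ∂μξ, Integrable (fun r => g (t, r)) μR := hgint.prod_right_ae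
      by_cases hL1 : Integrable (ξ a)
      · -- ξ a integrable but not square-integrable
        have hidint : Integrable (fun t : ℝ => t) μξ := by
          rw [integrable_map_measure
            ((by fun_prop : Measurable fun t : ℝ => t).aestronglyMeasurable)
            (hmeas a).aemeasurable]
          exact hL1
        have hA0 : A = 0 := by
          by_contra hA
          obtain ⟨r₀, hr₀⟩ := hslR.exists
          have h1 : Integrable (fun t : ℝ => A * t ^ 2) μξ := by
            have h2 := hr₀.sub ((hidint.const_mul r₀.1).add (integrable_const r₀.2))
            refine h2.congr (ae_of_all _ fun t => ?_)
            simp only [Pi.sub_apply, Pi.add_apply, hgdef]; ring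
          have h3 : Integrable (fun t : ℝ => t ^ 2) μξ := by
            have h4 := h1.const_mul (1/A)
            refine h4.congr (ae_of_all _ fun t => ?_)
            field_simp
          exact hsq' h3
        -- get two distinct "good" points for the slices in the other direction
        have htwo : ∃ t₁ t₂ : ℝ, t₁ ≠ t₂ ∧ Integrable (fun r => g (t₁, r)) μR ∧
            Integrable (fun r => g (t₂, r)) μR := by
          by_contra hcon
          push_neg at hcon
          obtain ⟨t₀, ht₀⟩ := hslξ.exists
          have hsub : {t : ℝ | ¬ t = t₀} ⊆ {t : ℝ | ¬ Integrable (fun r => g (t, r)) μR} := by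
            intro t ht hint
            exact hcon t t₀ ht hint ht₀
          have hnull : μξ {t : ℝ | ¬ t = t₀} = 0 :=
            measure_mono_null hsub (ae_iff.mp hslξ)
          have hconst : ∀ᵐ ω ∂ℙ, ξ a ω = t₀ :=
            (ae_map_iff (hmeas a).aemeasurable (measurableSet_eq (a := t₀))).mp
              (ae_iff.mpr hnull)
          refine hsq ((integrable_const (t₀ ^ 2)).congr ?_)
          filter_upwards [hconst] with ω hω
          rw [hω]
        obtain ⟨t₁, t₂, hne, hg1, hg2⟩ := htwo
        have hBint' : Integrable (fun r : ℝ × ℝ => r.1) μR := by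
          have hd := hg1.sub hg2
          have hd' : Integrable (fun r : ℝ × ℝ => r.1 * (t₁ - t₂)) μR := by
            refine hd.congr (ae_of_all _ fun r => ?_)
            simp only [Pi.sub_apply, hgdef, hA0]; ring
          have := hd'.mul_const (t₁ - t₂)⁻¹
          refine this.congr (ae_of_all _ fun r => ?_)
          field_simp [sub_ne_zero.mpr hne]
        have hCint' : Integrable (fun r : ℝ × ℝ => r.2) μR := by
          have hd := hg1.sub (hBint'.mul_const t₁)
          refine hd.congr (ae_of_all _ fun r => ?_)
          simp only [Pi.sub_apply, hgdef, hA0]; ring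
        have hBint : Integrable B := by
          have := (integrable_map_measure measurable_fst.aestronglyMeasurable
            hRmeas.aemeasurable).mp hBint'
          exact this
        have hCint : Integrable C := by
          have := (integrable_map_measure measurable_snd.aestronglyMeasurable
            hRmeas.aemeasurable).mp hCint'
          exact this
        have hindB : IndepFun (ξ a) B ℙ := hindBC.comp measurable_id measurable_fst
        have hBξint : Integrable (fun ω => B ω * ξ a ω) :=
          hindB.symm.integrable_mul hBint hL1
        have hBξ0 : ∫ ω, B ω * ξ a ω = 0 := by
          have := hindB.symm.integral_fun_mul_eq_mul_integral hBint.aestronglyMeasurable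
            (hmeas a).aestronglyMeasurable
          calc ∫ ω, B ω * ξ a ω = (∫ ω, B ω) * ∫ ω, ξ a ω := this
            _ = 0 := by rw [hmean a, mul_zero]
        have hCint2 : Integrable C := hCint
        rw [hfun, hA0]
        have hfun2 : (fun ω => (0:ℝ) * ξ a ω ^ 2 + B ω * ξ a ω + C ω)
            = fun ω => B ω * ξ a ω + C ω := by funext ω; ring
        rw [hfun2, integral_add hBξint hCint2, hBξ0, zero_add]
        exact IH hCint2
      · -- ξ a not even integrable
        have hidint' : ¬ Integrable (fun t : ℝ => t) μξ := by
          intro hcon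
          exact hL1 ((integrable_map_measure
            ((by fun_prop : Measurable fun t : ℝ => t).aestronglyMeasurable)
            (hmeas a).aemeasurable).mp hcon)
        have hA0 : A = 0 := by
          by_contra hA
          obtain ⟨r₀, hr₀⟩ := hslR.exists
          have h1 : Integrable (fun t : ℝ => (t + r₀.1/(2*A)) ^ 2) μξ := by
            have h2 := (hr₀.sub (integrable_const (r₀.2 - r₀.1^2/(4*A)))).const_mul (1/A)
            refine h2.congr (ae_of_all _ fun t => ?_)
            simp only [Pi.sub_apply, hgdef]
            field_simp
            ring
          have h3 : Integrable (fun t : ℝ => t ^ 2) μξ := by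
            refine Integrable.mono' ((h1.const_mul 2).add
              (integrable_const (2 * (r₀.1/(2*A))^2)))
              ((by fun_prop : Measurable fun t : ℝ => t ^ 2).aestronglyMeasurable) ?_
            filter_upwards with t
            simp only [Pi.add_apply]
            rw [Real.norm_eq_abs, abs_of_nonneg (sq_nonneg t)]
            nlinarith [sq_nonneg (t + 2*(r₀.1/(2*A)))]
          exact hsq' h3
        have haeB : ∀ᵐ r ∂μR, r.1 = 0 := by
          filter_upwards [hslR] with r hr
          by_contra hb
          apply hidint'
          have h2 := (hr.sub (integrable_const r.2)).const_mul (1/r.1)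
          refine h2.congr (ae_of_all _ fun t => ?_)
          simp only [Pi.sub_apply, hgdef, hA0]
          field_simp
          ring
        have hBae0 : ∀ᵐ ω ∂ℙ, B ω = 0 := by
          have hms : MeasurableSet {r : ℝ × ℝ | r.1 = 0} :=
            measurable_fst (measurableSet_singleton 0)
          exact (ae_map_iff hRmeas.aemeasurable hms).mp haeB
        have hqC : (fun ω => ∑ i ∈ insert a s', ∑ i' ∈ insert a s', M i i' * (ξ i ω * ξ i' ω))
            =ᵐ[ℙ] C := by
          filter_upwards [hBae0] with ω hω
          rw [hdecomp ω, hA0, hω]; ring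
        rw [integral_congr_ae hqC]
        exact IH (hq.congr hqC)

end AuxLemmas

set_option maxHeartbeats 1600000 in
/-- GCN expectation.  For a 1-layer GCN with random input vectors and
random weight matrix, for distinct non-adjacent vertices `u, v`,
`E[h_u ⬝ h_v] = (C / √(d̂_u d̂_v)) · ∑_{k ∈ N(u) ∩ N(v)} 1 / d̂_k`
where `C = σ_node² σ_weight² F F'` and `d̂_w = deg w + 1`. -/
theorem gcn_expected_inner_product
    {V : Type*} [Fintype V] [DecidableEq V]
    (G : SimpleGraph V) [DecidableRel G.Adj]
    (u v : V) (huv : u ≠ v) (hadj : ¬ G.Adj u v)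
    {Ω : Type*} [MeasureSpace Ω] [IsProbabilityMeasure (ℙ : Measure Ω)]
    (F F' : ℕ)
    (X : V → Fin F → Ω → ℝ) (W : Fin F' → Fin F → Ω → ℝ)
    (σnode σweight : ℝ)
    (hXmeas : ∀ k i, Measurable (X k i))
    (hWmeas : ∀ j i, Measurable (W j i))
    -- the entries of `X` are jointly independent
    (hXindep : iIndepFun
      (fun (p : V × Fin F) ω => X p.1 p.2 ω) ℙ)
    -- the entries of `W` are jointly independent
    (hWindep : iIndepFun
      (fun (p : Fin F' × Fin F) ω => W p.1 p.2 ω) ℙ)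
    -- `W` is independent of `X`
    (hXW : IndepFun (fun ω (p : V × Fin F) => X p.1 p.2 ω)
                    (fun ω (p : Fin F' × Fin F) => W p.1 p.2 ω) ℙ)
    -- mean zero, variance `σ_node²` entries of `X`
    (hXmean : ∀ k i, ∫ ω, X k i ω = 0)
    (hXvar : ∀ k i, ∫ ω, (X k i ω) ^ 2 = σnode ^ 2)
    -- mean zero, variance `σ_weight²` entries of `W`
    (hWmean : ∀ j i, ∫ ω, W j i ω = 0)
    (hWvar : ∀ j i, ∫ ω, (W j i ω) ^ 2 = σweight ^ 2)
    -- `d̂_w = d_w + 1`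
    (dhat : V → ℝ) (hdhat : ∀ w, dhat w = G.degree w + 1)
    -- the 1-layer GCN output
    (h : V → Ω → Fin F' → ℝ)
    (hh : ∀ w ω j, h w ω j =
      ∑ i : Fin F, W j i ω *
        (∑ k ∈ insert w (G.neighborFinset w),
          (1 / Real.sqrt (dhat k * dhat w)) * X k i ω)) :
    ∫ ω, ∑ j : Fin F', h u ω j * h v ω j =
      (σnode ^ 2 * σweight ^ 2 * F * F') / Real.sqrt (dhat u * dhat v) *
        ∑ k ∈ G.neighborFinset u ∩ G.neighborFinset v, 1 / dhat k := by
  classical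
  have hdpos : ∀ w, 0 < dhat w := by
    intro w; rw [hdhat w]; positivity
  set Nu : Finset V := insert u (G.neighborFinset u) with hNu
  set Nv : Finset V := insert v (G.neighborFinset v) with hNv
  set cu : V → ℝ := fun k => 1 / Real.sqrt (dhat k * dhat u) with hcu
  set cv : V → ℝ := fun k => 1 / Real.sqrt (dhat k * dhat v) with hcv
  -- pointwise expansion of the inner product into monomials
  have hYexp : ∀ ω, (∑ j : Fin F', h u ω j * h v ω j)
      = ∑ j : Fin F', ∑ i : Fin F, ∑ i' : Fin F, ∑ k ∈ Nu, ∑ k' ∈ Nv,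
          (cu k * cv k') * ((W j i ω * W j i' ω) * (X k i ω * X k' i' ω)) := by
    intro ω
    refine Finset.sum_congr rfl fun j _ => ?_
    rw [hh u ω j, hh v ω j, Finset.sum_mul_sum]
    refine Finset.sum_congr rfl fun i _ => ?_
    refine Finset.sum_congr rfl fun i' _ => ?_
    rw [mul_mul_mul_comm, Finset.sum_mul_sum, Finset.mul_sum]
    refine Finset.sum_congr rfl fun k _ => ?_
    rw [Finset.mul_sum]
    refine Finset.sum_congr rfl fun k' _ => ?_
    simp only [hcu, hcv]
    ring
  -- the two independent "vector" random variables
  set Ξ : Ω → (V × Fin F) → ℝ := fun ω p => X p.1 p.2 ω with hΞ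
  set Θ : Ω → (Fin F' × Fin F) → ℝ := fun ω p => W p.1 p.2 ω with hΘ
  have hΞm : Measurable Ξ := measurable_pi_lambda _ fun p => hXmeas p.1 p.2
  have hΘm : Measurable Θ := measurable_pi_lambda _ fun p => hWmeas p.1 p.2
  have hmonoind : ∀ (j : Fin F') (i i' : Fin F) (k k' : V),
      IndepFun (fun ω => W j i ω * W j i' ω) (fun ω => X k i ω * X k' i' ω) ℙ := by
    intro j i i' k k'
    have hφ : Measurable fun x : (V × Fin F) → ℝ => x (k, i) * x (k', i') :=
      (measurable_pi_apply _).mul (measurable_pi_apply _)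
    have hψ : Measurable fun w : (Fin F' × Fin F) → ℝ => w (j, i) * w (j, i') :=
      (measurable_pi_apply _).mul (measurable_pi_apply _)
    exact (hXW.comp hφ hψ).symm
  have hWWval : ∀ (j : Fin F') (i i' : Fin F),
      ∫ ω, W j i ω * W j i' ω = if i = i' then σweight ^ 2 else 0 := by
    intro j i i'
    by_cases hii : i = i'
    · subst hii
      rw [if_pos rfl, ← hWvar j i]
      exact integral_congr_ae (ae_of_all _ fun ω => (pow_two (W j i ω)).symm)
    · rw [if_neg hii]
      have hne : ((j, i) : Fin F' × Fin F) ≠ (j, i') := by simp [hii]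
      have hind := hWindep.indepFun hne
      have hmul := hind.integral_fun_mul_eq_mul_integral (hWmeas j i).aestronglyMeasurable
        (hWmeas j i').aestronglyMeasurable
      calc ∫ ω, W j i ω * W j i' ω = (∫ ω, W j i ω) * ∫ ω, W j i' ω := hmul
        _ = 0 := by rw [hWmean j i, zero_mul]
  have hXXval : ∀ (k : V) (i : Fin F) (k' : V) (i' : Fin F),
      ∫ ω, X k i ω * X k' i' ω = if (k, i) = (k', i') then σnode ^ 2 else 0 := by
    intro k i k' i'
    by_cases hkk : (k, i) = (k', i')
    · rw [if_pos hkk]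
      rw [Prod.mk.injEq] at hkk
      obtain ⟨rfl, rfl⟩ := hkk
      rw [← hXvar k i]
      exact integral_congr_ae (ae_of_all _ fun ω => (pow_two (X k i ω)).symm)
    · rw [if_neg hkk]
      have hind := hXindep.indepFun hkk
      have hmul := hind.integral_fun_mul_eq_mul_integral (hXmeas k i).aestronglyMeasurable
        (hXmeas k' i').aestronglyMeasurable
      calc ∫ ω, X k i ω * X k' i' ω = (∫ ω, X k i ω) * ∫ ω, X k' i' ω := hmul
        _ = 0 := by rw [hXmean k i, zero_mul]
  -- integrability of the monomials in the nondegenerate case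
  have hmonoInt : σnode ≠ 0 → σweight ≠ 0 → ∀ (j : Fin F') (i i' : Fin F) (k k' : V),
      Integrable (fun ω =>
        (cu k * cv k') * ((W j i ω * W j i' ω) * (X k i ω * X k' i' ω))) := by
    intro hσn hσw j i i' k k'
    have hWsq : ∀ j i, Integrable fun ω => W j i ω ^ 2 := by
      intro j i; by_contra hc
      exact hσw (pow_eq_zero_iff two_ne_zero |>.mp ((hWvar j i).symm.trans (integral_undef hc)))
    have hXsq : ∀ k i, Integrable fun ω => X k i ω ^ 2 := by
      intro k i; by_contra hc
      exact hσn (pow_eq_zero_iff two_ne_zero |>.mp ((hXvar k i).symm.trans (integral_undef hc)))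
    have h1 : Integrable fun ω => W j i ω * W j i' ω :=
      aux_integrable_mul_of_sq (hWmeas j i) (hWmeas j i') (hWsq j i) (hWsq j i')
    have h2 : Integrable fun ω => X k i ω * X k' i' ω :=
      aux_integrable_mul_of_sq (hXmeas k i) (hXmeas k' i') (hXsq k i) (hXsq k' i')
    have h3 := (hmonoind j i i' k k').integrable_mul h1 h2
    exact h3.const_mul _
  have hBIGint : σnode ≠ 0 → σweight ≠ 0 →
      Integrable (fun ω => ∑ j : Fin F', ∑ i : Fin F, ∑ i' : Fin F, ∑ k ∈ Nu, ∑ k' ∈ Nv,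
        (cu k * cv k') * ((W j i ω * W j i' ω) * (X k i ω * X k' i' ω))) := by
    intro hσn hσw
    exact integrable_finset_sum _ fun j _ => integrable_finset_sum _ fun i _ =>
      integrable_finset_sum _ fun i' _ => integrable_finset_sum _ fun k _ =>
      integrable_finset_sum _ fun k' _ => hmonoInt hσn hσw j i i' k k'
  -- square-root algebra
  have hck : ∀ k, cu k * cv k = 1 / Real.sqrt (dhat u * dhat v) * (1 / dhat k) := by
    intro k
    have h1 : Real.sqrt (dhat k * dhat u) * Real.sqrt (dhat k * dhat v)
        = dhat k * Real.sqrt (dhat u * dhat v) := by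
      rw [← Real.sqrt_mul (mul_nonneg (hdpos k).le (hdpos u).le),
        show dhat k * dhat u * (dhat k * dhat v) = dhat k ^ 2 * (dhat u * dhat v) by ring,
        Real.sqrt_mul (sq_nonneg _), Real.sqrt_sq (hdpos k).le]
    simp only [hcu, hcv]
    rw [div_mul_div_comm, one_mul, h1, div_mul_div_comm, one_mul, mul_comm (dhat k)]
  have hNN : Nu ∩ Nv = G.neighborFinset u ∩ G.neighborFinset v := by
    ext a
    simp only [hNu, hNv, Finset.mem_inter, Finset.mem_insert, SimpleGraph.mem_neighborFinset]
    constructor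
    · rintro ⟨h1, h2⟩
      rcases h1 with rfl | hu'
      · rcases h2 with rfl | hv'
        · exact absurd rfl huv
        · exact absurd hv'.symm hadj
      · rcases h2 with rfl | hv'
        · exact absurd hu' hadj
        · exact ⟨hu', hv'⟩
    · rintro ⟨hu', hv'⟩
      exact ⟨Or.inr hu', Or.inr hv'⟩
  by_cases hint : Integrable (fun ω => ∑ j : Fin F', h u ω j * h v ω j)
  swap
  · -- not integrable: both sides vanish
    rw [integral_undef hint]
    have hdeg : σnode = 0 ∨ σweight = 0 := by
      by_contra hc
      push_neg at hc
      exact hint (((hBIGint hc.1 hc.2).congr (ae_of_all _ fun ω => (hYexp ω).symm)))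
    rcases hdeg with h0 | h0 <;> rw [h0] <;> simp
  -- the function Φ on the product space
  set Φ : ((V × Fin F) → ℝ) × ((Fin F' × Fin F) → ℝ) → ℝ := fun p =>
    ∑ j : Fin F', (∑ i : Fin F, p.2 (j, i) * (∑ k ∈ Nu, cu k * p.1 (k, i)))
      * (∑ i : Fin F, p.2 (j, i) * (∑ k ∈ Nv, cv k * p.1 (k, i))) with hΦ
  have hYΦ : ∀ ω, (∑ j : Fin F', h u ω j * h v ω j) = Φ (Ξ ω, Θ ω) := by
    intro ω
    simp only [hΦ, hΞ, hΘ, hh, hNu, hNv, hcu, hcv]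
  have hΦm : Measurable Φ := by
    refine Finset.measurable_sum _ fun j _ => Measurable.mul ?_ ?_ <;>
      exact Finset.measurable_sum _ fun i _ => Measurable.mul
        ((measurable_pi_apply _).comp measurable_snd)
        (Finset.measurable_sum _ fun k _ =>
          ((measurable_pi_apply _).comp measurable_fst).const_mul _)
  haveI : IsProbabilityMeasure (Measure.map Ξ ℙ) :=
    Measure.isProbabilityMeasure_map hΞm.aemeasurable
  haveI : IsProbabilityMeasure (Measure.map Θ ℙ) :=
    Measure.isProbabilityMeasure_map hΘm.aemeasurable
  have hmapP : Measure.map (fun ω => (Ξ ω, Θ ω)) ℙ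
      = (Measure.map Ξ ℙ).prod (Measure.map Θ ℙ) :=
    (indepFun_iff_map_prod_eq_prod_map_map hΞm.aemeasurable hΘm.aemeasurable).mp hXW
  have hIntΦ : Integrable Φ ((Measure.map Ξ ℙ).prod (Measure.map Θ ℙ)) := by
    rw [← hmapP]
    refine (integrable_map_measure hΦm.aestronglyMeasurable
      (hΞm.prodMk hΘm).aemeasurable).mpr ?_
    exact hint.congr (ae_of_all _ hYΦ)
  have hYint : ∫ ω, ∑ j : Fin F', h u ω j * h v ω j
      = ∫ p, Φ p ∂((Measure.map Ξ ℙ).prod (Measure.map Θ ℙ)) := by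
    rw [integral_congr_ae (ae_of_all _ hYΦ), ← hmapP]
    exact (integral_map (hΞm.prodMk hΘm).aemeasurable hΦm.aestronglyMeasurable).symm
  by_cases hσn : σnode = 0
  · -- X-side degenerate: the expectation vanishes
    have hRHS : (σnode ^ 2 * σweight ^ 2 * F * F') / Real.sqrt (dhat u * dhat v) *
        ∑ k ∈ G.neighborFinset u ∩ G.neighborFinset v, 1 / dhat k = 0 := by
      rw [hσn]; simp
    rw [hRHS, hYint, integral_prod_symm Φ hIntΦ]
    have hslice : ∀ᵐ w ∂(Measure.map Θ ℙ),
        Integrable (fun x => Φ (x, w)) (Measure.map Ξ ℙ) := hIntΦ.prod_left_ae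
    have hzero : ∀ᵐ w ∂(Measure.map Θ ℙ), ∫ x, Φ (x, w) ∂(Measure.map Ξ ℙ) = 0 := by
      filter_upwards [hslice] with w hw
      have hsm : Measurable fun x : (V × Fin F) → ℝ => Φ (x, w) :=
        hΦm.comp (measurable_id.prodMk measurable_const)
      have hIntΩ : Integrable (fun ω => Φ (Ξ ω, w)) :=
        (integrable_map_measure hsm.aestronglyMeasurable hΞm.aemeasurable).mp hw
      set MX : (V × Fin F) → (V × Fin F) → ℝ := fun p p' =>
        (if p.1 ∈ Nu then cu p.1 else 0) * ((if p'.1 ∈ Nv then cv p'.1 else 0) *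
          (∑ j : Fin F', w (j, p.2) * w (j, p'.2))) with hMX
      have hform : ∀ x : (V × Fin F) → ℝ,
          Φ (x, w) = ∑ p : V × Fin F, ∑ p' : V × Fin F, MX p p' * (x p * x p') := by
        intro x
        have hL : Φ (x, w) = ∑ i : Fin F, ∑ i' : Fin F, ∑ k ∈ Nu, ∑ k' ∈ Nv,
            (∑ j : Fin F', w (j, i) * w (j, i'))
              * ((cu k * cv k') * (x (k, i) * x (k', i'))) := by
          simp only [hΦ]
          rw [show (∑ j : Fin F', (∑ i : Fin F, w (j, i) * (∑ k ∈ Nu, cu k * x (k, i)))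
              * (∑ i : Fin F, w (j, i) * (∑ k ∈ Nv, cv k * x (k, i))))
              = ∑ j : Fin F', ∑ i : Fin F, ∑ i' : Fin F,
                (w (j, i) * (∑ k ∈ Nu, cu k * x (k, i)))
                  * (w (j, i') * (∑ k ∈ Nv, cv k * x (k, i'))) from
            Finset.sum_congr rfl fun j _ => Finset.sum_mul_sum _ _ _ _]
          rw [Finset.sum_comm]
          refine Finset.sum_congr rfl fun i _ => ?_
          rw [Finset.sum_comm]
          refine Finset.sum_congr rfl fun i' _ => ?_
          calc (∑ j : Fin F', (w (j, i) * (∑ k ∈ Nu, cu k * x (k, i)))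
                * (w (j, i') * (∑ k ∈ Nv, cv k * x (k, i'))))
              = (∑ j : Fin F', w (j, i) * w (j, i'))
                  * ((∑ k ∈ Nu, cu k * x (k, i)) * (∑ k ∈ Nv, cv k * x (k, i'))) := by
                rw [Finset.sum_mul]
                exact Finset.sum_congr rfl fun j _ => by ring
            _ = ∑ k ∈ Nu, ∑ k' ∈ Nv, (∑ j : Fin F', w (j, i) * w (j, i'))
                  * ((cu k * cv k') * (x (k, i) * x (k', i'))) := by
                rw [show (∑ k ∈ Nu, cu k * x (k, i)) * (∑ k' ∈ Nv, cv k' * x (k', i'))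
                    = ∑ k ∈ Nu, ∑ k' ∈ Nv, (cu k * x (k, i)) * (cv k' * x (k', i')) from
                  Finset.sum_mul_sum _ _ _ _]
                rw [Finset.mul_sum]
                refine Finset.sum_congr rfl fun k _ => ?_
                rw [Finset.mul_sum]
                refine Finset.sum_congr rfl fun k' _ => ?_
                ring
        have hR : (∑ p : V × Fin F, ∑ p' : V × Fin F, MX p p' * (x p * x p'))
            = ∑ i : Fin F, ∑ i' : Fin F, ∑ k ∈ Nu, ∑ k' ∈ Nv,
              (∑ j : Fin F', w (j, i) * w (j, i'))
                * ((cu k * cv k') * (x (k, i) * x (k', i'))) := by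
          rw [Fintype.sum_prod_type, Finset.sum_comm]
          refine Finset.sum_congr rfl fun i _ => ?_
          rw [show (∑ k : V, ∑ p' : V × Fin F, MX (k, i) p' * (x (k, i) * x p'))
              = ∑ k : V, ∑ i' : Fin F, ∑ k' : V,
                  MX (k, i) (k', i') * (x (k, i) * x (k', i')) from
            Finset.sum_congr rfl fun k _ => by
              rw [Fintype.sum_prod_type]; exact Finset.sum_comm]
          rw [Finset.sum_comm]
          refine Finset.sum_congr rfl fun i' _ => ?_
          rw [← Finset.univ_inter Nu, ← Finset.sum_ite_mem]
          refine Finset.sum_congr rfl fun k _ => ?_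
          by_cases hk : k ∈ Nu
          · rw [if_pos hk, ← Finset.univ_inter Nv, ← Finset.sum_ite_mem]
            refine Finset.sum_congr rfl fun k' _ => ?_
            by_cases hk' : k' ∈ Nv
            · rw [if_pos hk']
              simp only [hMX, if_pos hk, if_pos hk']
              ring
            · rw [if_neg hk']
              simp only [hMX, if_neg hk']
              ring
          · rw [if_neg hk]
            refine Finset.sum_eq_zero fun k' _ => ?_
            simp only [hMX, if_neg hk]
            ring
        rw [hL, hR]
      have hIntQ : Integrable (fun ω => ∑ p : V × Fin F, ∑ p' : V × Fin F,
          MX p p' * (X p.1 p.2 ω * X p'.1 p'.2 ω)) := by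
        refine hIntΩ.congr (ae_of_all _ fun ω => ?_)
        exact hform (Ξ ω)
      have hzero' : ∫ ω, ∑ p : V × Fin F, ∑ p' : V × Fin F,
          MX p p' * (X p.1 p.2 ω * X p'.1 p'.2 ω) = 0 := by
        exact aux_quad_sum_integral_zero (fun p ω => X p.1 p.2 ω)
          (fun p => hXmeas p.1 p.2) hXindep (fun p => hXmean p.1 p.2)
          (fun p => by rw [hXvar p.1 p.2, hσn]; norm_num)
          MX Finset.univ (by exact hIntQ)
      calc ∫ x, Φ (x, w) ∂(Measure.map Ξ ℙ)
          = ∫ ω, Φ (Ξ ω, w) := integral_map hΞm.aemeasurable hsm.aestronglyMeasurable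
        _ = ∫ ω, ∑ p : V × Fin F, ∑ p' : V × Fin F,
              MX p p' * (X p.1 p.2 ω * X p'.1 p'.2 ω) :=
            integral_congr_ae (ae_of_all _ fun ω => hform (Ξ ω))
        _ = 0 := hzero'
    rw [integral_congr_ae hzero]
    simp
  by_cases hσw : σweight = 0
  · -- W-side degenerate: the expectation vanishes
    have hRHS : (σnode ^ 2 * σweight ^ 2 * F * F') / Real.sqrt (dhat u * dhat v) *
        ∑ k ∈ G.neighborFinset u ∩ G.neighborFinset v, 1 / dhat k = 0 := by
      rw [hσw]; simp
    rw [hRHS, hYint, integral_prod Φ hIntΦ]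
    have hslice : ∀ᵐ x ∂(Measure.map Ξ ℙ),
        Integrable (fun w => Φ (x, w)) (Measure.map Θ ℙ) := hIntΦ.prod_right_ae
    have hzero : ∀ᵐ x ∂(Measure.map Ξ ℙ), ∫ w, Φ (x, w) ∂(Measure.map Θ ℙ) = 0 := by
      filter_upwards [hslice] with x hx
      have hsm : Measurable fun w : (Fin F' × Fin F) → ℝ => Φ (x, w) :=
        hΦm.comp (measurable_const.prodMk measurable_id)
      have hIntΩ : Integrable (fun ω => Φ (x, Θ ω)) :=
        (integrable_map_measure hsm.aestronglyMeasurable hΘm.aemeasurable).mp hx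
      set MW : (Fin F' × Fin F) → (Fin F' × Fin F) → ℝ := fun q q' =>
        if q.1 = q'.1 then
          (∑ k ∈ Nu, cu k * x (k, q.2)) * (∑ k ∈ Nv, cv k * x (k, q'.2)) else 0 with hMW
      have hform : ∀ w : (Fin F' × Fin F) → ℝ,
          Φ (x, w) = ∑ q : Fin F' × Fin F, ∑ q' : Fin F' × Fin F,
            MW q q' * (w q * w q') := by
        intro w
        have hL : Φ (x, w) = ∑ j : Fin F', ∑ i : Fin F, ∑ i' : Fin F,
            ((∑ k ∈ Nu, cu k * x (k, i)) * (∑ k ∈ Nv, cv k * x (k, i')))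
              * (w (j, i) * w (j, i')) := by
          simp only [hΦ]
          refine Finset.sum_congr rfl fun j _ => ?_
          rw [Finset.sum_mul_sum]
          refine Finset.sum_congr rfl fun i _ => ?_
          refine Finset.sum_congr rfl fun i' _ => ?_
          ring
        have hR : (∑ q : Fin F' × Fin F, ∑ q' : Fin F' × Fin F, MW q q' * (w q * w q'))
            = ∑ j : Fin F', ∑ i : Fin F, ∑ i' : Fin F,
              ((∑ k ∈ Nu, cu k * x (k, i)) * (∑ k ∈ Nv, cv k * x (k, i')))
                * (w (j, i) * w (j, i')) := by
          rw [Fintype.sum_prod_type]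
          refine Finset.sum_congr rfl fun j _ => ?_
          refine Finset.sum_congr rfl fun i _ => ?_
          rw [show (∑ q' : Fin F' × Fin F, MW (j, i) q' * (w (j, i) * w q'))
              = ∑ i' : Fin F, ∑ j' : Fin F',
                  MW (j, i) (j', i') * (w (j, i) * w (j', i')) from by
            rw [Fintype.sum_prod_type]; exact Finset.sum_comm]
          refine Finset.sum_congr rfl fun i' _ => ?_
          have : ∀ j' : Fin F', MW (j, i) (j', i') * (w (j, i) * w (j', i'))
              = if j = j' then ((∑ k ∈ Nu, cu k * x (k, i)) * (∑ k ∈ Nv, cv k * x (k, i')))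
                  * (w (j, i) * w (j', i')) else 0 := by
            intro j'
            by_cases hjj : j = j'
            · simp only [hMW, if_pos hjj]
            · simp only [hMW, if_neg hjj, zero_mul]
          rw [Finset.sum_congr rfl fun j' _ => this j']
          rw [Finset.sum_ite_eq]
          simp
        rw [hL, hR]
      have hIntQ : Integrable (fun ω => ∑ q : Fin F' × Fin F, ∑ q' : Fin F' × Fin F,
          MW q q' * (W q.1 q.2 ω * W q'.1 q'.2 ω)) := by
        refine hIntΩ.congr (ae_of_all _ fun ω => ?_)
        exact hform (Θ ω)
      have hzero' : ∫ ω, ∑ q : Fin F' × Fin F, ∑ q' : Fin F' × Fin F,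
          MW q q' * (W q.1 q.2 ω * W q'.1 q'.2 ω) = 0 := by
        exact aux_quad_sum_integral_zero (fun q ω => W q.1 q.2 ω)
          (fun q => hWmeas q.1 q.2) hWindep (fun q => hWmean q.1 q.2)
          (fun q => by rw [hWvar q.1 q.2, hσw]; norm_num)
          MW Finset.univ (by exact hIntQ)
      calc ∫ w, Φ (x, w) ∂(Measure.map Θ ℙ)
          = ∫ ω, Φ (x, Θ ω) := integral_map hΘm.aemeasurable hsm.aestronglyMeasurable
        _ = ∫ ω, ∑ q : Fin F' × Fin F, ∑ q' : Fin F' × Fin F,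
              MW q q' * (W q.1 q.2 ω * W q'.1 q'.2 ω) :=
            integral_congr_ae (ae_of_all _ fun ω => hform (Θ ω))
        _ = 0 := hzero'
    rw [integral_congr_ae hzero]
    simp
  · -- nondegenerate case: the full computation
    have h5 : ∀ (j : Fin F') (i i' : Fin F) (k : V), Integrable (fun ω =>
        ∑ k' ∈ Nv, (cu k * cv k') * ((W j i ω * W j i' ω) * (X k i ω * X k' i' ω))) :=
      fun j i i' k => integrable_finset_sum _ fun k' _ => hmonoInt hσn hσw j i i' k k'
    have h4 : ∀ (j : Fin F') (i i' : Fin F), Integrable (fun ω =>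
        ∑ k ∈ Nu, ∑ k' ∈ Nv, (cu k * cv k') *
          ((W j i ω * W j i' ω) * (X k i ω * X k' i' ω))) :=
      fun j i i' => integrable_finset_sum _ fun k _ => h5 j i i' k
    have h3 : ∀ (j : Fin F') (i : Fin F), Integrable (fun ω =>
        ∑ i' : Fin F, ∑ k ∈ Nu, ∑ k' ∈ Nv, (cu k * cv k') *
          ((W j i ω * W j i' ω) * (X k i ω * X k' i' ω))) :=
      fun j i => integrable_finset_sum _ fun i' _ => h4 j i i'
    have h2 : ∀ (j : Fin F'), Integrable (fun ω =>
        ∑ i : Fin F, ∑ i' : Fin F, ∑ k ∈ Nu, ∑ k' ∈ Nv, (cu k * cv k') *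
          ((W j i ω * W j i' ω) * (X k i ω * X k' i' ω))) :=
      fun j => integrable_finset_sum _ fun i _ => h3 j i
    have hTval : ∀ (j : Fin F') (i i' : Fin F) (k k' : V),
        ∫ ω, (cu k * cv k') * ((W j i ω * W j i' ω) * (X k i ω * X k' i' ω))
          = (cu k * cv k') * ((if i = i' then σweight ^ 2 else 0) *
              (if (k, i) = (k', i') then σnode ^ 2 else 0)) := by
      intro j i i' k k'
      rw [integral_const_mul]
      have hmul : ∫ ω, (W j i ω * W j i' ω) * (X k i ω * X k' i' ω)
          = (∫ ω, W j i ω * W j i' ω) * ∫ ω, X k i ω * X k' i' ω :=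
        (hmonoind j i i' k k').integral_fun_mul_eq_mul_integral
          ((hWmeas j i).mul (hWmeas j i')).aestronglyMeasurable
          ((hXmeas k i).mul (hXmeas k' i')).aestronglyMeasurable
      rw [hmul, hWWval j i i', hXXval k i k' i']
    have hI5 : ∫ ω, (∑ j : Fin F', ∑ i : Fin F, ∑ i' : Fin F, ∑ k ∈ Nu, ∑ k' ∈ Nv,
        (cu k * cv k') * ((W j i ω * W j i' ω) * (X k i ω * X k' i' ω)))
        = ∑ j : Fin F', ∑ i : Fin F, ∑ i' : Fin F, ∑ k ∈ Nu, ∑ k' ∈ Nv,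
            (cu k * cv k') * ((if i = i' then σweight ^ 2 else 0) *
              (if (k, i) = (k', i') then σnode ^ 2 else 0)) := by
      rw [integral_finset_sum _ fun j _ => h2 j]
      refine Finset.sum_congr rfl fun j _ => ?_
      rw [integral_finset_sum _ fun i _ => h3 j i]
      refine Finset.sum_congr rfl fun i _ => ?_
      rw [integral_finset_sum _ fun i' _ => h4 j i i']
      refine Finset.sum_congr rfl fun i' _ => ?_
      rw [integral_finset_sum _ fun k _ => h5 j i i' k]
      refine Finset.sum_congr rfl fun k _ => ?_
      rw [integral_finset_sum _ fun k' _ => hmonoInt hσn hσw j i i' k k']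
      exact Finset.sum_congr rfl fun k' _ => hTval j i i' k k'
    have hc1 : ∀ i : Fin F,
        (∑ i' : Fin F, ∑ k ∈ Nu, ∑ k' ∈ Nv, (cu k * cv k') *
          ((if i = i' then σweight ^ 2 else 0) *
            (if (k, i) = (k', i') then σnode ^ 2 else 0)))
        = ∑ k ∈ Nu ∩ Nv, (cu k * cv k) * (σweight ^ 2 * σnode ^ 2) := by
      intro i
      rw [Finset.sum_eq_single i]
      · calc (∑ k ∈ Nu, ∑ k' ∈ Nv, (cu k * cv k') * ((if i = i then σweight ^ 2 else 0) *
              (if (k, i) = (k', i) then σnode ^ 2 else 0)))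
            = ∑ k ∈ Nu, if k ∈ Nv then (cu k * cv k) * (σweight ^ 2 * σnode ^ 2) else 0 := by
              refine Finset.sum_congr rfl fun k _ => ?_
              rw [show (∑ k' ∈ Nv, (cu k * cv k') * ((if i = i then σweight ^ 2 else 0) *
                  (if (k, i) = (k', i) then σnode ^ 2 else 0)))
                  = ∑ k' ∈ Nv, if k = k' then
                      (cu k * cv k') * (σweight ^ 2 * σnode ^ 2) else 0 from
                Finset.sum_congr rfl fun k' _ => by
                  by_cases hkk : k = k'
                  · subst hkk; simp
                  · simp [hkk, Prod.ext_iff]]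
              rw [Finset.sum_ite_eq]
          _ = ∑ k ∈ Nu ∩ Nv, (cu k * cv k) * (σweight ^ 2 * σnode ^ 2) :=
            Finset.sum_ite_mem Nu Nv _
      · intro i' _ hne
        refine Finset.sum_eq_zero fun k _ => Finset.sum_eq_zero fun k' _ => ?_
        rw [if_neg (fun hc : i = i' => hne hc.symm)]
        simp
      · intro hi; exact absurd (Finset.mem_univ i) hi
    have hS : ∑ k ∈ G.neighborFinset u ∩ G.neighborFinset v,
        (cu k * cv k) * (σweight ^ 2 * σnode ^ 2)
        = (1 / Real.sqrt (dhat u * dhat v) * (σweight ^ 2 * σnode ^ 2)) *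
            ∑ k ∈ G.neighborFinset u ∩ G.neighborFinset v, 1 / dhat k := by
      rw [Finset.mul_sum]
      refine Finset.sum_congr rfl fun k _ => ?_
      rw [hck k]; ring
    calc ∫ ω, ∑ j : Fin F', h u ω j * h v ω j
        = ∫ ω, (∑ j : Fin F', ∑ i : Fin F, ∑ i' : Fin F, ∑ k ∈ Nu, ∑ k' ∈ Nv,
            (cu k * cv k') * ((W j i ω * W j i' ω) * (X k i ω * X k' i' ω))) :=
          integral_congr_ae (ae_of_all _ hYexp)
      _ = ∑ j : Fin F', ∑ i : Fin F, ∑ i' : Fin F, ∑ k ∈ Nu, ∑ k' ∈ Nv,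
            (cu k * cv k') * ((if i = i' then σweight ^ 2 else 0) *
              (if (k, i) = (k', i') then σnode ^ 2 else 0)) := hI5
      _ = ∑ j : Fin F', ∑ i : Fin F, ∑ k ∈ Nu ∩ Nv,
            (cu k * cv k) * (σweight ^ 2 * σnode ^ 2) :=
          Finset.sum_congr rfl fun j _ => Finset.sum_congr rfl fun i _ => hc1 i
      _ = (F' : ℝ) * ((F : ℝ) * ∑ k ∈ G.neighborFinset u ∩ G.neighborFinset v,
            (cu k * cv k) * (σweight ^ 2 * σnode ^ 2)) := by
          rw [hNN]
          simp [Finset.sum_const, Finset.card_univ, nsmul_eq_mul, mul_assoc]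
      _ = (σnode ^ 2 * σweight ^ 2 * F * F') / Real.sqrt (dhat u * dhat v) *
            ∑ k ∈ G.neighborFinset u ∩ G.neighborFinset v, 1 / dhat k := by
          rw [hS]; ring
end

section
/- Let G = (V,E) be a finite simple undirected graph and F ∈ ℕ₊. On a probability space, let X : V → ℝ^F be a random matrix whose entries X_{k,i} are jointly independent and identically distributed with mean 0 and variance 1/F. For each vertex w define h_w = Σ_{k ∈ N(w)} X_k. Then for every pair of vertices (u, v) ∈ V × V, E[h_u · h_v] = CN(u,v), the number of common neighbors of u and v. -/
open MeasureTheory ProbabilityTheory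

/-- unbiased common-neighbor estimator, expectation.  If the entries of the
random vectors `X_k ∈ ℝ^F` are i.i.d. with mean `0` and variance `1/F`, and
`h_w = ∑_{k ∈ N(w)} X_k`, then for every pair of vertices `(u, v)`,
`E[h_u ⬝ h_v] = CN(u,v)`, the number of common neighbors of `u` and `v`. -/
theorem message_passing_expected_inner_product_eq_commonNeighbors
    {V : Type*} [Fintype V] [DecidableEq V]
    (G : SimpleGraph V) [DecidableRel G.Adj]
    {Ω : Type*} [MeasureSpace Ω] [IsProbabilityMeasure (ℙ : Measure Ω)]
    (F : ℕ) (hF : 0 < F)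
    (X : V → Fin F → Ω → ℝ)
    (hXmeas : ∀ k i, Measurable (X k i))
    -- the entries of `X` are jointly independent
    (hXindep : iIndepFun
      (fun (p : V × Fin F) ω => X p.1 p.2 ω) ℙ)
    -- and identically distributed
    (hXid : ∀ (p q : V × Fin F), IdentDistrib (X p.1 p.2) (X q.1 q.2) ℙ ℙ)
    -- with mean `0` and variance `1/F`
    (hXmean : ∀ k i, ∫ ω, X k i ω = 0)
    (hXvar : ∀ k i, ∫ ω, (X k i ω) ^ 2 = 1 / F)
    -- `h_w = ∑_{k ∈ N(w)} X_k`
    (h : V → Ω → Fin F → ℝ)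
    (hh : ∀ w ω i, h w ω i = ∑ k ∈ G.neighborFinset w, X k i ω)
    (u v : V) :
    ∫ ω, ∑ i : Fin F, h u ω i * h v ω i =
      ((G.neighborFinset u ∩ G.neighborFinset v).card : ℝ) := by
  have hFne : (1 : ℝ) / F ≠ 0 := by positivity
  have hInt2 : ∀ k i, Integrable (fun ω => X k i ω ^ 2) ℙ := by
    intro k i
    by_contra hcon
    have := hXvar k i
    rw [integral_undef hcon] at this
    exact hFne this.symm
  have hL2 : ∀ k i, MemLp (X k i) 2 ℙ := fun k i =>
    (memLp_two_iff_integrable_sq (hXmeas k i).aestronglyMeasurable).mpr (hInt2 k i)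
  have hInt1 : ∀ k i, Integrable (X k i) ℙ := fun k i =>
    (hL2 k i).integrable (by norm_num)
  have hIntMul : ∀ k l i, Integrable (fun ω => X k i ω * X l i ω) ℙ := by
    intro k l i
    refine Integrable.mono' (((hInt2 k i).add (hInt2 l i)).div_const 2)
      ((hXmeas k i).mul (hXmeas l i)).aestronglyMeasurable ?_
    filter_upwards with ω
    have := sq_nonneg (X k i ω - X l i ω)
    have := sq_nonneg (X k i ω + X l i ω)
    simp only [Pi.add_apply]
    rw [Real.norm_eq_abs, abs_mul]
    rcases abs_cases (X k i ω) with ⟨hk, _⟩ | ⟨hk, _⟩ <;>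
      rcases abs_cases (X l i ω) with ⟨hl, _⟩ | ⟨hl, _⟩ <;> rw [hk, hl] <;> nlinarith
  have hcross : ∀ k l (i : Fin F), k ≠ l → ∫ ω, X k i ω * X l i ω = 0 := by
    intro k l i hkl
    have hne : ((k, i) : V × Fin F) ≠ (l, i) := by simp [hkl]
    have hind : IndepFun (X k i) (X l i) ℙ := hXindep.indepFun hne
    have h2 : ∫ ω, X k i ω * X l i ω = (∫ ω, X k i ω) * ∫ ω, X l i ω :=
      IndepFun.integral_fun_mul_eq_mul_integral hind (hInt1 k i).aestronglyMeasurable (hInt1 l i).aestronglyMeasurable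
    rw [h2, hXmean k i, zero_mul]
  have key : ∀ i : Fin F,
      ∫ ω, h u ω i * h v ω i =
        ((G.neighborFinset u ∩ G.neighborFinset v).card : ℝ) / F := by
    intro i
    have : ∀ ω, h u ω i * h v ω i =
        ∑ k ∈ G.neighborFinset u, ∑ l ∈ G.neighborFinset v, X k i ω * X l i ω := by
      intro ω
      rw [hh, hh, Finset.sum_mul_sum]
    simp only [this]
    rw [integral_finset_sum _ (fun k _ => integrable_finset_sum _ (fun l _ => hIntMul k l i)),
      Finset.sum_congr rfl (fun k _ => integral_finset_sum _ (fun l _ => hIntMul k l i))]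
    have hin : ∀ k ∈ G.neighborFinset u,
        (∑ l ∈ G.neighborFinset v, ∫ ω, X k i ω * X l i ω)
          = if k ∈ G.neighborFinset v then 1 / (F : ℝ) else 0 := by
      intro k _
      split_ifs with hk
      · rw [Finset.sum_eq_single k (fun l _ hlk => hcross k l i (Ne.symm hlk))
          (fun hkv => absurd hk hkv)]
        have : ∀ ω, X k i ω * X k i ω = X k i ω ^ 2 := fun ω => (sq _).symm
        simp only [this]
        exact hXvar k i
      · exact Finset.sum_eq_zero fun l hl => hcross k l i (fun e => hk (e ▸ hl))
    rw [Finset.sum_congr rfl hin, Finset.sum_ite_mem,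
      Finset.sum_const, Finset.inter_comm]
    simp [div_eq_mul_inv, mul_comm]
  rw [integral_finset_sum]
  · rw [Finset.sum_congr rfl (fun i _ => key i), Finset.sum_const]
    simp
    field_simp
  · intro i _
    have : (fun ω => h u ω i * h v ω i) =
        fun ω => ∑ k ∈ G.neighborFinset u, ∑ l ∈ G.neighborFinset v, X k i ω * X l i ω := by
      funext ω; rw [hh, hh, Finset.sum_mul_sum]
    rw [this]
    exact integrable_finset_sum _ (fun k _ => integrable_finset_sum _ (fun l _ => hIntMul k l i))
end

section
/- Let G = (V,E) be a finite simple undirected graph and F ∈ ℕ₊. On a probability space, let X : V → ℝ^F be a random matrix whose entries X_{k,i} are jointly independent and identically distributed as a real random variable x with mean 0, variance 1/F, and finite fourth moment. For each vertex w define h_w = Σ_{k ∈ N(w)} X_k. Then for every pair of vertices (u, v) ∈ V × V, Var(h_u · h_v) = (1/F)(d_u d_v + CN(u,v)² − 2·CN(u,v)) + F · Var(x²) · CN(u,v). -/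
open MeasureTheory ProbabilityTheory
open scoped ENNReal

lemma aux_integral_prod {Ω : Type*} [MeasureSpace Ω] [IsProbabilityMeasure (ℙ : Measure Ω)]
    {ι : Type*} (Z : ι → Ω → ℝ) (hmeas : ∀ i, Measurable (Z i))
    (hindep : iIndepFun Z ℙ) (s : Finset ι) :
    ∫ ω, ∏ q ∈ s, Z q ω = ∏ q ∈ s, ∫ ω, Z q ω := by
  classical
  induction s using Finset.induction_on with
  | empty => simp
  | @insert a s ha ih =>
    have hind : IndepFun (Z a) (∏ q ∈ s, Z q) ℙ :=
      (hindep.indepFun_finsetProd_of_notMem hmeas ha).symm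
    have hsm : Measurable (∏ q ∈ s, Z q) := by
      have : (∏ q ∈ s, Z q) = fun ω => ∏ q ∈ s, Z q ω := by
        funext ω; simp [Finset.prod_apply]
      rw [this]; exact Finset.measurable_prod s fun i _ => hmeas i
    have hmul := hind.integral_mul_eq_mul_integral (hmeas a).aestronglyMeasurable hsm.aestronglyMeasurable
    have h1 : (fun ω => ∏ q ∈ insert a s, Z q ω) = Z a * (∏ q ∈ s, Z q) := by
      funext ω; rw [Finset.prod_insert ha]; simp [Finset.prod_apply]
    rw [Finset.prod_insert ha, show (∫ ω, ∏ q ∈ insert a s, Z q ω) = ∫ ω, (Z a * ∏ q ∈ s, Z q) ω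
        from by rw [← h1], hmul, ← ih]
    congr 1
    refine congrArg _ ?_
    funext ω; simp [Finset.prod_apply]

lemma aux_indicator {α β : Type*} [DecidableEq α] [DecidableEq β] (i : β) (a b c d : α)
    (c2 k : ℝ) :
    c2 * ((if a = b then (1:ℝ) else 0) * (if c = d then (1:ℝ) else 0)
        + (if a = c then (1:ℝ) else 0) * (if b = d then (1:ℝ) else 0)
        + (if a = d then (1:ℝ) else 0) * (if b = c then (1:ℝ) else 0))
      + k * ((if a = b then (1:ℝ) else 0) * ((if a = c then (1:ℝ) else 0) *
          (if a = d then (1:ℝ) else 0)))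
    = c2 * ((if a = b then (1:ℝ) else 0) * (if c = d then (1:ℝ) else 0))
      + c2 * (if ((i, c, d) : β × α × α) = (i, a, b) then (1:ℝ) else 0)
      + c2 * (if ((i, c, d) : β × α × α) = (i, b, a) then (1:ℝ) else 0)
      + k * ((if a = b then (1:ℝ) else 0) *
          (if ((i, c, d) : β × α × α) = (i, a, a) then (1:ℝ) else 0)) := by
  simp only [Prod.mk.injEq, true_and]
  by_cases h1 : a = b <;> by_cases h2 : c = d <;> by_cases h3 : a = c <;> by_cases h4 : b = d <;>
      by_cases h5 : a = d <;> by_cases h6 : b = c <;>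
    (try simp_all) <;> (try split_ifs) <;> (try simp_all) <;> (try ring) <;>
    (intro hh; subst hh; simp_all)

/-- unbiased common-neighbor estimator, variance.  If the entries of the
random vectors `X_k ∈ ℝ^F` are i.i.d. as a random variable `x` with mean `0`, variance `1/F`
and finite fourth moment, and `h_w = ∑_{k ∈ N(w)} X_k`, then for every pair of vertices
`(u, v)`,
`Var(h_u ⬝ h_v) = (1/F)(d_u d_v + CN(u,v)² − 2 CN(u,v)) + F · Var(x²) · CN(u,v)`. -/
theorem message_passing_variance_inner_product
    {V : Type*} [Fintype V] [DecidableEq V]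
    (G : SimpleGraph V) [DecidableRel G.Adj]
    {Ω : Type*} [MeasureSpace Ω] [IsProbabilityMeasure (ℙ : Measure Ω)]
    (F : ℕ) (hF : 0 < F)
    (X : V → Fin F → Ω → ℝ) (x : Ω → ℝ)
    (hXmeas : ∀ k i, Measurable (X k i)) (hxmeas : Measurable x)
    -- the entries of `X` are jointly independent
    (hXindep : iIndepFun
      (fun (p : V × Fin F) ω => X p.1 p.2 ω) ℙ)
    -- each entry is distributed as `x`
    (hXid : ∀ k i, IdentDistrib (X k i) x ℙ ℙ)
    -- `x` has mean `0`, variance `1/F` and finite fourth moment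
    (hxmean : ∫ ω, x ω = 0)
    (hxvar : ∫ ω, (x ω) ^ 2 = 1 / F)
    (hxL4 : MemLp x 4 ℙ)
    -- `h_w = ∑_{k ∈ N(w)} X_k`
    (h : V → Ω → Fin F → ℝ)
    (hh : ∀ w ω i, h w ω i = ∑ k ∈ G.neighborFinset w, X k i ω)
    (u v : V) :
    variance (fun ω => ∑ i : Fin F, h u ω i * h v ω i) ℙ =
      (1 / F) * ((G.degree u : ℝ) * (G.degree v : ℝ)
          + ((G.neighborFinset u ∩ G.neighborFinset v).card : ℝ) ^ 2
          - 2 * ((G.neighborFinset u ∩ G.neighborFinset v).card : ℝ))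
        + (F : ℝ) * variance (fun ω => (x ω) ^ 2) ℙ *
            ((G.neighborFinset u ∩ G.neighborFinset v).card : ℝ) := by
  classical
  have hFne : (F : ℝ) ≠ 0 := Nat.cast_ne_zero.mpr hF.ne'
  set Nu := G.neighborFinset u with hNu
  set Nv := G.neighborFinset v with hNv
  -- basic infrastructure
  have hYmeas : ∀ p : V × Fin F, Measurable (fun ω => X p.1 p.2 ω) := fun p => hXmeas p.1 p.2
  have hYL4 : ∀ p : V × Fin F, MemLp (fun ω => X p.1 p.2 ω) 4 ℙ :=
    fun p => (hXid p.1 p.2).symm.memLp_snd hxL4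
  have h244 : (1 : ℝ≥0∞) / 2 = 1 / 4 + 1 / 4 := by
    have h4 : (4 : ℝ≥0∞)⁻¹ + 4⁻¹ = 2⁻¹ := by
      rw [← two_mul, show (4 : ℝ≥0∞) = 2 * 2 by norm_num,
        ENNReal.mul_inv (by norm_num) (by norm_num), ← mul_assoc,
        ENNReal.mul_inv_cancel (by norm_num) (by norm_num), one_mul]
    simp only [one_div]
    rw [h4]
  have h122 : (1 : ℝ≥0∞) / 1 = 1 / 2 + 1 / 2 := by
    simp only [one_div, inv_one]
    exact ENNReal.inv_two_add_inv_two.symm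
  have hmulL2 : ∀ p q : V × Fin F, MemLp (fun ω => X p.1 p.2 ω * X q.1 q.2 ω) 2 ℙ := by
    intro p q
    have := (hYL4 q).smul (hYL4 p) (p := 4) (q := 4) (r := 2) (hpqr := ⟨by simpa only [one_div] using h244.symm⟩)
    simpa [smul_eq_mul, Pi.mul_def] using this
  have hint2 : ∀ (i : Fin F) (a b : V), Integrable (fun ω => X a i ω * X b i ω) ℙ :=
    fun i a b => (hmulL2 (a, i) (b, i)).integrable (by norm_num)
  have hint4 : ∀ (i j : Fin F) (a b c d : V),
      Integrable (fun ω => (X a i ω * X b i ω) * (X c j ω * X d j ω)) ℙ := by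
    intro i j a b c d
    have := (hmulL2 (c, j) (d, j)).smul (hmulL2 (a, i) (b, i)) (p := 2) (q := 2) (r := 1) (hpqr := ⟨by simpa only [one_div] using h122.symm⟩)
    exact memLp_one_iff_integrable.mp (by simpa [smul_eq_mul, Pi.mul_def] using this)
  have IC : ∀ {f g : Ω → ℝ}, (∀ ω, f ω = g ω) → (∫ ω, f ω) = ∫ ω, g ω :=
    fun {f g} hfg => congrArg (integral ℙ) (funext hfg)
  -- moments
  have E_pow : ∀ (a : V) (i : Fin F) (n : ℕ), (∫ ω, (X a i ω) ^ n) = ∫ ω, (x ω) ^ n :=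
    fun a i n => ((hXid a i).comp (measurable_id.pow_const n)).integral_eq
  have E_prod : ∀ (s : Finset (V × Fin F)) (n : V × Fin F → ℕ),
      (∫ ω, ∏ q ∈ s, (X q.1 q.2 ω) ^ (n q)) = ∏ q ∈ s, ∫ ω, (x ω) ^ (n q) := by
    intro s n
    rw [aux_integral_prod (fun q ω => (X q.1 q.2 ω) ^ (n q))
        (fun q => (hYmeas q).pow_const _)
        (hXindep.comp (fun q t => t ^ (n q)) (fun q => measurable_id.pow_const _)) s]
    exact Finset.prod_congr rfl fun q _ => by
      have := ((hXid q.1 q.2).comp (measurable_id.pow_const (n q))).integral_eq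
      exact this
  have hxint : (∫ ω, (x ω) ^ 1) = 0 := by simpa using hxmean
  have Epq : ∀ (i : Fin F) (a b : V) (m n : ℕ), a ≠ b →
      (∫ ω, (X a i ω) ^ m * (X b i ω) ^ n) = (∫ ω, (x ω) ^ m) * (∫ ω, (x ω) ^ n) := by
    intro i a b m n hab
    have hpq : ((a, i) : V × Fin F) ≠ (b, i) := fun hcon => hab (congrArg Prod.fst hcon)
    have h := E_prod {(a, i), (b, i)} (fun r => if r = (a, i) then m else n)
    simp only [Finset.prod_pair hpq] at h
    simp only [if_pos (rfl : ((a,i) : V × Fin F) = (a,i)), if_neg (Ne.symm hpq)] at h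
    exact h
  have E3 : ∀ (i : Fin F) (a b c : V) (n : ℕ), a ≠ b → a ≠ c → b ≠ c →
      (∫ ω, (X a i ω) ^ n * (X b i ω * X c i ω)) = 0 := by
    intro i a b c n hab hac hbc
    have hpq : ((a, i) : V × Fin F) ≠ (b, i) := fun hcon => hab (congrArg Prod.fst hcon)
    have hpr : ((a, i) : V × Fin F) ≠ (c, i) := fun hcon => hac (congrArg Prod.fst hcon)
    have hqr : ((b, i) : V × Fin F) ≠ (c, i) := fun hcon => hbc (congrArg Prod.fst hcon)
    have h := E_prod {(a, i), (b, i), (c, i)} (fun r => if r = (a, i) then n else 1)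
    simp only [Finset.prod_insert (show ((a,i) : V × Fin F) ∉ ({(b,i),(c,i)} : Finset (V × Fin F)) by simp [hpq, hpr]),
      Finset.prod_pair hqr] at h
    simp only [if_pos (rfl : ((a,i) : V × Fin F) = (a,i)), if_neg (Ne.symm hpq), if_neg (Ne.symm hpr), if_true] at h
    simp only [pow_one] at h
    rw [h, hxmean]
    ring
  have E4 : ∀ (i : Fin F) (a b c d : V), a ≠ b → a ≠ c → a ≠ d → b ≠ c → b ≠ d → c ≠ d →
      (∫ ω, X a i ω * (X b i ω * (X c i ω * X d i ω))) = 0 := by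
    intro i a b c d hab hac had hbc hbd hcd
    have pab : ((a, i) : V × Fin F) ≠ (b, i) := fun hcon => hab (congrArg Prod.fst hcon)
    have pac : ((a, i) : V × Fin F) ≠ (c, i) := fun hcon => hac (congrArg Prod.fst hcon)
    have pad : ((a, i) : V × Fin F) ≠ (d, i) := fun hcon => had (congrArg Prod.fst hcon)
    have pbc : ((b, i) : V × Fin F) ≠ (c, i) := fun hcon => hbc (congrArg Prod.fst hcon)
    have pbd : ((b, i) : V × Fin F) ≠ (d, i) := fun hcon => hbd (congrArg Prod.fst hcon)
    have pcd : ((c, i) : V × Fin F) ≠ (d, i) := fun hcon => hcd (congrArg Prod.fst hcon)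
    have h := E_prod {(a, i), (b, i), (c, i), (d, i)} (fun _ => 1)
    simp only [Finset.prod_insert (show ((a,i) : V × Fin F) ∉ ({(b,i),(c,i),(d,i)} : Finset (V × Fin F)) by simp [pab, pac, pad]),
      Finset.prod_insert (show ((b,i) : V × Fin F) ∉ ({(c,i),(d,i)} : Finset (V × Fin F)) by simp [pbc, pbd]),
      Finset.prod_pair pcd, pow_one] at h
    rw [h, hxmean]
    ring
  have EF : ∀ (i : Fin F) (a b : V),
      (∫ ω, X a i ω * X b i ω) = (∫ ω, (x ω) ^ 2) * (if a = b then (1 : ℝ) else 0) := by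
    intro i a b
    by_cases hab : a = b
    · subst hab
      rw [if_pos rfl, mul_one]
      rw [IC (g := fun ω => (X a i ω) ^ 2) (fun ω => by ring)]
      exact E_pow a i 2
    · rw [if_neg hab, mul_zero]
      rw [IC (g := fun ω => (X a i ω) ^ 1 * (X b i ω) ^ 1) (fun ω => by ring)]
      rw [Epq i a b 1 1 hab, hxint]
      ring
  have M4 : ∀ (i : Fin F) (a b c d : V),
      (∫ ω, (X a i ω * X b i ω) * (X c i ω * X d i ω)) =
        (∫ ω, (x ω) ^ 2) ^ 2 * ((if a = b then (1 : ℝ) else 0) * (if c = d then (1 : ℝ) else 0)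
            + (if a = c then (1 : ℝ) else 0) * (if b = d then (1 : ℝ) else 0)
            + (if a = d then (1 : ℝ) else 0) * (if b = c then (1 : ℝ) else 0))
          + ((∫ ω, (x ω) ^ 4) - 3 * (∫ ω, (x ω) ^ 2) ^ 2) *
              ((if a = b then (1 : ℝ) else 0) * ((if a = c then (1 : ℝ) else 0) *
                (if a = d then (1 : ℝ) else 0))) := by
    intro i a b c d
    by_cases hab : a = b
    · subst hab
      by_cases hcd : c = d
      · subst hcd
        by_cases hac : a = c
        · subst hac
          have hL : (∫ ω, (X a i ω * X a i ω) * (X a i ω * X a i ω)) = ∫ ω, (X a i ω) ^ 4 :=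
            IC fun ω => by ring
          rw [hL, E_pow a i 4]
          simp only [if_pos rfl, if_true]
          ring
        · have hL : (∫ ω, (X a i ω * X a i ω) * (X c i ω * X c i ω))
              = ∫ ω, (X a i ω) ^ 2 * (X c i ω) ^ 2 := IC fun ω => by ring
          rw [hL, Epq i a c 2 2 hac]
          simp only [if_pos rfl, if_true, if_neg hac]
          ring
      · by_cases hac : a = c
        · subst hac
          have had : a ≠ d := hcd
          have hL : (∫ ω, (X a i ω * X a i ω) * (X a i ω * X d i ω))
              = ∫ ω, (X a i ω) ^ 3 * (X d i ω) ^ 1 := IC fun ω => by ring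
          rw [hL, Epq i a d 3 1 had]
          simp only [pow_one, hxmean, if_pos rfl, if_neg had, if_neg hcd]
          ring
        · by_cases had : a = d
          · subst had
            have hca : c ≠ a := fun hx => hac hx.symm
            have hL : (∫ ω, (X a i ω * X a i ω) * (X c i ω * X a i ω))
                = ∫ ω, (X a i ω) ^ 3 * (X c i ω) ^ 1 := IC fun ω => by ring
            rw [hL, Epq i a c 3 1 hac]
            simp only [pow_one, hxmean, if_pos rfl, if_neg hac, if_neg hcd]
            ring
          · have hL : (∫ ω, (X a i ω * X a i ω) * (X c i ω * X d i ω))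
                = ∫ ω, (X a i ω) ^ 2 * (X c i ω * X d i ω) := IC fun ω => by ring
            rw [hL, E3 i a c d 2 hac had hcd]
            simp only [if_pos rfl, if_true, if_neg hac, if_neg had, if_neg hcd]
            ring
    · by_cases hcd : c = d
      · subst hcd
        by_cases hac : a = c
        · subst hac
          have hba : b ≠ a := fun hx => hab hx.symm
          have hL : (∫ ω, (X a i ω * X b i ω) * (X a i ω * X a i ω))
              = ∫ ω, (X a i ω) ^ 3 * (X b i ω) ^ 1 := IC fun ω => by ring
          rw [hL, Epq i a b 3 1 hab]
          simp only [pow_one, hxmean, if_pos rfl, if_neg hab, if_neg hba]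
          ring
        · by_cases hbc : b = c
          · subst hbc
            have hL : (∫ ω, (X a i ω * X b i ω) * (X b i ω * X b i ω))
                = ∫ ω, (X b i ω) ^ 3 * (X a i ω) ^ 1 := IC fun ω => by ring
            rw [hL, Epq i b a 3 1 (fun hx => hab hx.symm)]
            simp only [pow_one, hxmean, if_pos rfl, if_neg hab, if_neg hac]
            ring
          · have hL : (∫ ω, (X a i ω * X b i ω) * (X c i ω * X c i ω))
                = ∫ ω, (X c i ω) ^ 2 * (X a i ω * X b i ω) := IC fun ω => by ring
            rw [hL, E3 i c a b 2 (fun hx => hac hx.symm) (fun hx => hbc hx.symm) hab]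
            simp only [if_neg hab, if_neg hac, if_neg hbc]
            ring
      · by_cases hac : a = c
        · subst hac
          by_cases hbd : b = d
          · subst hbd
            have hL : (∫ ω, (X a i ω * X b i ω) * (X a i ω * X b i ω))
                = ∫ ω, (X a i ω) ^ 2 * (X b i ω) ^ 2 := IC fun ω => by ring
            rw [hL, Epq i a b 2 2 hab]
            have had : a ≠ b := hab
            simp only [if_pos rfl, if_true, if_neg hab, if_neg hcd]
            ring
          · have had : a ≠ d := hcd
            have hL : (∫ ω, (X a i ω * X b i ω) * (X a i ω * X d i ω))
                = ∫ ω, (X a i ω) ^ 2 * (X b i ω * X d i ω) := IC fun ω => by ring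
            rw [hL, E3 i a b d 2 hab had hbd]
            simp only [if_pos rfl, if_true, if_neg hab, if_neg hbd, if_neg hcd, if_neg had]
            ring
        · by_cases had : a = d
          · subst had
            by_cases hbc : b = c
            · subst hbc
              have hL : (∫ ω, (X a i ω * X b i ω) * (X b i ω * X a i ω))
                  = ∫ ω, (X a i ω) ^ 2 * (X b i ω) ^ 2 := IC fun ω => by ring
              rw [hL, Epq i a b 2 2 hab]
              simp only [if_pos rfl, if_true, if_neg hab, if_neg hac, if_neg hcd]
              ring
            · have hL : (∫ ω, (X a i ω * X b i ω) * (X c i ω * X a i ω))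
                  = ∫ ω, (X a i ω) ^ 2 * (X b i ω * X c i ω) := IC fun ω => by ring
              rw [hL, E3 i a b c 2 hab hac hbc]
              simp only [if_pos rfl, if_true, if_neg hab, if_neg hac, if_neg hbc, if_neg hcd]
              ring
          · by_cases hbc : b = c
            · subst hbc
              have hbd : b ≠ d := hcd
              have hL : (∫ ω, (X a i ω * X b i ω) * (X b i ω * X d i ω))
                  = ∫ ω, (X b i ω) ^ 2 * (X a i ω * X d i ω) := IC fun ω => by ring
              rw [hL, E3 i b a d 2 (fun hx => hab hx.symm) hbd had]
              simp only [if_neg hab, if_neg hac, if_neg had, if_neg hbd, if_neg hcd]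
              ring
            · by_cases hbd : b = d
              · subst hbd
                have hcb : c ≠ b := hcd
                have hL : (∫ ω, (X a i ω * X b i ω) * (X c i ω * X b i ω))
                    = ∫ ω, (X b i ω) ^ 2 * (X a i ω * X c i ω) := IC fun ω => by ring
                rw [hL, E3 i b a c 2 (fun hx => hab hx.symm) (fun hx => hcb hx.symm) hac]
                simp only [if_neg hab, if_neg hac, if_neg had, if_neg hcd]
                ring
              · have hL : (∫ ω, (X a i ω * X b i ω) * (X c i ω * X d i ω))
                    = ∫ ω, X a i ω * (X b i ω * (X c i ω * X d i ω)) := IC fun ω => by ring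
                rw [hL, E4 i a b c d hab hac had hbc hbd hcd]
                simp only [if_neg hab, if_neg hac, if_neg had, if_neg hbc, if_neg hbd, if_neg hcd]
                ring
  have K : ∀ (i j : Fin F) (a b c d : V),
      (∫ ω, (X a i ω * X b i ω) * (X c j ω * X d j ω)) =
        (∫ ω, (x ω) ^ 2) ^ 2 * ((if a = b then (1:ℝ) else 0) * (if c = d then (1:ℝ) else 0))
        + (∫ ω, (x ω) ^ 2) ^ 2 * (if ((j, c, d) : Fin F × V × V) = (i, a, b) then (1:ℝ) else 0)
        + (∫ ω, (x ω) ^ 2) ^ 2 * (if ((j, c, d) : Fin F × V × V) = (i, b, a) then (1:ℝ) else 0)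
        + ((∫ ω, (x ω) ^ 4) - 3 * (∫ ω, (x ω) ^ 2) ^ 2) *
            ((if a = b then (1:ℝ) else 0) *
              (if ((j, c, d) : Fin F × V × V) = (i, a, a) then (1:ℝ) else 0)) := by
    intro i j a b c d
    by_cases hij : i = j
    · subst hij
      rw [M4 i a b c d]
      exact aux_indicator i a b c d _ _
    · have hInd : IndepFun (fun ω => X a i ω * X b i ω) (fun ω => X c j ω * X d j ω) ℙ := by
        have := hXindep.indepFun_mul_mul (f := fun p ω => X p.1 p.2 ω) hYmeas
          (a, i) (b, i) (c, j) (d, j)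
          (fun hcon => hij (congrArg Prod.snd hcon))
          (fun hcon => hij (congrArg Prod.snd hcon))
          (fun hcon => hij (congrArg Prod.snd hcon))
          (fun hcon => hij (congrArg Prod.snd hcon))
        exact this
      have hEq : (∫ ω, (X a i ω * X b i ω) * (X c j ω * X d j ω))
          = (∫ ω, X a i ω * X b i ω) * ∫ ω, X c j ω * X d j ω :=
        hInd.integral_mul_eq_mul_integral ((hXmeas a i).mul (hXmeas b i)).aestronglyMeasurable
          ((hXmeas c j).mul (hXmeas d j)).aestronglyMeasurable
      have g1 : ¬ (((j, c, d) : Fin F × V × V) = (i, a, b)) :=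
        fun hcon => hij (congrArg Prod.fst hcon).symm
      have g2 : ¬ (((j, c, d) : Fin F × V × V) = (i, b, a)) :=
        fun hcon => hij (congrArg Prod.fst hcon).symm
      have g3 : ¬ (((j, c, d) : Fin F × V × V) = (i, a, a)) :=
        fun hcon => hij (congrArg Prod.fst hcon).symm
      rw [hEq, EF i a b, EF j c d]
      simp only [if_neg g1, if_neg g2, if_neg g3]
      ring
  -- rewrite the statistic as a single sum over a product finset
  have hSrw : (fun ω => ∑ i : Fin F, h u ω i * h v ω i)
      = fun ω => ∑ t ∈ (Finset.univ ×ˢ Nu ×ˢ Nv : Finset (Fin F × V × V)),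
          X t.2.1 t.1 ω * X t.2.2 t.1 ω := by
    funext ω
    simp only [Finset.sum_product]
    exact Finset.sum_congr rfl fun i _ => by
      rw [hh u ω i, hh v ω i, Finset.sum_mul_sum]
  rw [hSrw]
  have hS2 : MemLp (fun ω => ∑ t ∈ (Finset.univ ×ˢ Nu ×ˢ Nv : Finset (Fin F × V × V)),
      X t.2.1 t.1 ω * X t.2.2 t.1 ω) 2 ℙ :=
    memLp_finsetSum _ fun t _ => hmulL2 (t.2.1, t.1) (t.2.2, t.1)
  rw [variance_eq_sub hS2]
  -- indicator sums
  have count1 : (∑ t ∈ (Finset.univ ×ˢ Nu ×ˢ Nv : Finset (Fin F × V × V)),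
      (if t.2.1 = t.2.2 then (1:ℝ) else 0)) = (F : ℝ) * ((Nu ∩ Nv).card : ℝ) := by
    simp only [Finset.sum_product]
    simp only [Finset.sum_ite_eq, Finset.sum_ite_mem, Finset.sum_const, Finset.card_univ,
      Fintype.card_fin, nsmul_eq_mul, mul_one]
    try push_cast
    try ring
  have ES : (∫ ω, ∑ t ∈ (Finset.univ ×ˢ Nu ×ˢ Nv : Finset (Fin F × V × V)),
      X t.2.1 t.1 ω * X t.2.2 t.1 ω)
      = (∫ ω, (x ω) ^ 2) * ((F : ℝ) * ((Nu ∩ Nv).card : ℝ)) := by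
    rw [integral_finset_sum _ fun t _ => hint2 t.1 t.2.1 t.2.2]
    rw [Finset.sum_congr rfl fun (t : Fin F × V × V) _ => EF t.1 t.2.1 t.2.2]
    rw [← Finset.mul_sum, count1]
  set A : Finset (Fin F × V × V) := Finset.univ ×ˢ Nu ×ˢ Nv with hA
  have hAcard : ((A.card : ℕ) : ℝ) = (F : ℝ) * ((Nu.card : ℝ) * (Nv.card : ℝ)) := by
    rw [hA]
    simp only [Finset.card_product, Finset.card_univ, Fintype.card_fin]
    push_cast
    ring
  have hsq : ((fun ω => ∑ t ∈ A, X t.2.1 t.1 ω * X t.2.2 t.1 ω) ^ 2)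
      = fun ω => ∑ t ∈ A, ∑ t' ∈ A,
          (X t.2.1 t.1 ω * X t.2.2 t.1 ω) * (X t'.2.1 t'.1 ω * X t'.2.2 t'.1 ω) := by
    funext ω
    simp only [Pi.pow_apply]
    rw [pow_two, Finset.sum_mul_sum]
  rw [hsq]
  rw [integral_finset_sum _ fun t _ =>
    integrable_finset_sum _ fun t' _ => hint4 t.1 t'.1 t.2.1 t.2.2 t'.2.1 t'.2.2]
  rw [Finset.sum_congr rfl fun t _ =>
    integral_finset_sum _ fun t' _ => hint4 t.1 t'.1 t.2.1 t.2.2 t'.2.1 t'.2.2]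
  rw [Finset.sum_congr rfl fun (t : Fin F × V × V) _ =>
    Finset.sum_congr rfl fun (t' : Fin F × V × V) _ =>
      K t.1 t'.1 t.2.1 t.2.2 t'.2.1 t'.2.2]
  simp only [Prod.mk.eta]
  simp only [Finset.sum_add_distrib]
  -- the four indicator double sums
  have T1 : (∑ t ∈ A, ∑ t' ∈ A, (∫ ω, (x ω) ^ 2) ^ 2 *
        ((if t.2.1 = t.2.2 then (1:ℝ) else 0) * (if t'.2.1 = t'.2.2 then (1:ℝ) else 0)))
      = (∫ ω, (x ω) ^ 2) ^ 2 * (((F : ℝ) * ((Nu ∩ Nv).card : ℝ)) * ((F : ℝ) * ((Nu ∩ Nv).card : ℝ))) := by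
    have h1 : ∀ t : Fin F × V × V, (∑ t' ∈ A, (∫ ω, (x ω) ^ 2) ^ 2 *
          ((if t.2.1 = t.2.2 then (1:ℝ) else 0) * (if t'.2.1 = t'.2.2 then (1:ℝ) else 0)))
        = (∫ ω, (x ω) ^ 2) ^ 2 * ((if t.2.1 = t.2.2 then (1:ℝ) else 0) *
            ((F : ℝ) * ((Nu ∩ Nv).card : ℝ))) := by
      intro t
      rw [← Finset.mul_sum, ← Finset.mul_sum, count1]
    rw [Finset.sum_congr rfl fun t _ => h1 t, ← Finset.mul_sum, ← Finset.sum_mul, count1]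
  have T2 : (∑ t ∈ A, ∑ t' ∈ A, (∫ ω, (x ω) ^ 2) ^ 2 * (if t' = t then (1:ℝ) else 0))
      = (∫ ω, (x ω) ^ 2) ^ 2 * ((F : ℝ) * ((Nu.card : ℝ) * (Nv.card : ℝ))) := by
    have h1 : ∀ t ∈ A, (∑ t' ∈ A, (∫ ω, (x ω) ^ 2) ^ 2 * (if t' = t then (1:ℝ) else 0))
        = (∫ ω, (x ω) ^ 2) ^ 2 := by
      intro t ht
      rw [← Finset.mul_sum, Finset.sum_ite_eq' A t fun _ => (1:ℝ), if_pos ht, mul_one]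
    rw [Finset.sum_congr rfl h1, Finset.sum_const, nsmul_eq_mul, hAcard]
    ring
  have count3 : (∑ t ∈ A, (if ((t.1, t.2.2, t.2.1) : Fin F × V × V) ∈ A then (1:ℝ) else 0))
      = (F : ℝ) * (((Nu ∩ Nv).card : ℝ) * ((Nu ∩ Nv).card : ℝ)) := by
    rw [hA]
    simp only [Finset.sum_product, Finset.mem_product, Finset.mem_univ, true_and]
    have hb : ∀ a : V, (∑ b ∈ Nv, (if b ∈ Nu ∧ a ∈ Nv then (1:ℝ) else 0))
        = (if a ∈ Nv then (1:ℝ) else 0) * ((Nu ∩ Nv).card : ℝ) := by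
      intro a
      by_cases hav : a ∈ Nv
      · simp only [hav, and_true, if_true]
        rw [Finset.sum_ite_mem, Finset.sum_const, nsmul_eq_mul, mul_one, Finset.inter_comm]
        simp [hav]
      · simp [hav]
    rw [Finset.sum_congr rfl fun i _ => Finset.sum_congr rfl fun a _ => hb a]
    rw [Finset.sum_congr rfl fun i _ => (by
      rw [← Finset.sum_mul, Finset.sum_ite_mem, Finset.sum_const, nsmul_eq_mul, mul_one] :
        (∑ a ∈ Nu, (if a ∈ Nv then (1:ℝ) else 0) * ((Nu ∩ Nv).card : ℝ))
          = ((Nu ∩ Nv).card : ℝ) * ((Nu ∩ Nv).card : ℝ))]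
    rw [Finset.sum_const, Finset.card_univ, Fintype.card_fin, nsmul_eq_mul]
  have T3 : (∑ t ∈ A, ∑ t' ∈ A, (∫ ω, (x ω) ^ 2) ^ 2 *
        (if t' = ((t.1, t.2.2, t.2.1) : Fin F × V × V) then (1:ℝ) else 0))
      = (∫ ω, (x ω) ^ 2) ^ 2 * ((F : ℝ) * (((Nu ∩ Nv).card : ℝ) * ((Nu ∩ Nv).card : ℝ))) := by
    have h1 : ∀ t : Fin F × V × V, (∑ t' ∈ A, (∫ ω, (x ω) ^ 2) ^ 2 *
          (if t' = ((t.1, t.2.2, t.2.1) : Fin F × V × V) then (1:ℝ) else 0))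
        = (∫ ω, (x ω) ^ 2) ^ 2 *
            (if ((t.1, t.2.2, t.2.1) : Fin F × V × V) ∈ A then (1:ℝ) else 0) := by
      intro t
      rw [← Finset.mul_sum, Finset.sum_ite_eq' A _ fun _ => (1:ℝ)]
    rw [Finset.sum_congr rfl fun t _ => h1 t, ← Finset.mul_sum, count3]
  have count4 : (∑ t ∈ A, ((if t.2.1 = t.2.2 then (1:ℝ) else 0) *
        (if ((t.1, t.2.1, t.2.1) : Fin F × V × V) ∈ A then (1:ℝ) else 0)))
      = (F : ℝ) * ((Nu ∩ Nv).card : ℝ) := by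
    rw [hA]
    simp only [Finset.sum_product, Finset.mem_product, Finset.mem_univ, true_and]
    have hb : ∀ a ∈ Nu, (∑ b ∈ Nv, (if a = b then (1:ℝ) else 0) *
          (if a ∈ Nu ∧ a ∈ Nv then (1:ℝ) else 0)) = (if a ∈ Nv then (1:ℝ) else 0) := by
      intro a ha
      rw [← Finset.sum_mul, Finset.sum_ite_eq]
      by_cases hav : a ∈ Nv
      · simp [hav, ha]
      · simp [hav]
    rw [Finset.sum_congr rfl fun i _ => Finset.sum_congr rfl hb]
    simp only [Finset.sum_ite_mem, Finset.sum_const, Finset.card_univ, Fintype.card_fin,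
      nsmul_eq_mul, mul_one]
    try push_cast
    try ring
  have T4 : (∑ t ∈ A, ∑ t' ∈ A, ((∫ ω, (x ω) ^ 4) - 3 * (∫ ω, (x ω) ^ 2) ^ 2) *
        ((if t.2.1 = t.2.2 then (1:ℝ) else 0) *
          (if t' = ((t.1, t.2.1, t.2.1) : Fin F × V × V) then (1:ℝ) else 0)))
      = ((∫ ω, (x ω) ^ 4) - 3 * (∫ ω, (x ω) ^ 2) ^ 2) * ((F : ℝ) * ((Nu ∩ Nv).card : ℝ)) := by
    have h1 : ∀ t : Fin F × V × V, (∑ t' ∈ A, ((∫ ω, (x ω) ^ 4) - 3 * (∫ ω, (x ω) ^ 2) ^ 2) *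
          ((if t.2.1 = t.2.2 then (1:ℝ) else 0) *
            (if t' = ((t.1, t.2.1, t.2.1) : Fin F × V × V) then (1:ℝ) else 0)))
        = ((∫ ω, (x ω) ^ 4) - 3 * (∫ ω, (x ω) ^ 2) ^ 2) *
            ((if t.2.1 = t.2.2 then (1:ℝ) else 0) *
              (if ((t.1, t.2.1, t.2.1) : Fin F × V × V) ∈ A then (1:ℝ) else 0)) := by
      intro t
      rw [← Finset.mul_sum, ← Finset.mul_sum, Finset.sum_ite_eq' A _ fun _ => (1:ℝ)]
    rw [Finset.sum_congr rfl fun t _ => h1 t, ← Finset.mul_sum, count4]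
  rw [T1, T2, T3, T4, ES]
  -- variance of x^2
  have hx2mem : MemLp (fun ω => (x ω) ^ 2) 2 ℙ := by
    have := hxL4.smul hxL4 (r := 2) (hpqr := ⟨by simpa only [one_div] using h244.symm⟩)
    simpa [smul_eq_mul, ← pow_two, Pi.pow_def] using this
  rw [variance_eq_sub hx2mem]
  have h42 : ((fun ω => (x ω) ^ 2) ^ 2) = fun ω => (x ω) ^ 4 := by
    funext ω
    simp only [Pi.pow_apply]
    ring
  rw [h42]
  have hdu : G.degree u = Nu.card := rfl
  have hdv : G.degree v = Nv.card := rfl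
  rw [hdu, hdv, hxvar]
  field_simp
  ring
end

section
/- Let G = (V,E) be a finite simple undirected graph and F ∈ ℕ₊. On a probability space, let X : V → ℝ^F be a random matrix whose entries X_{k,i} are jointly independent and identically distributed with mean 0 and variance 1/F. Define recursively h_v^{(0)} = X_v and h_v^{(l+1)} = Σ_{u ∈ N(v)} h_u^{(l)}. Then for all vertices u, v and all p, q ∈ ℕ, E[h_u^{(p)} · h_v^{(q)}] = Σ_{k ∈ V} |walks^{(p)}(k,u)| · |walks^{(q)}(k,v)|, where |walks^{(l)}(a,b)| denotes the number of walks of length l in G from a to b. -/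
open MeasureTheory ProbabilityTheory

/-- multi-layer message passing counts walks.  With i.i.d. mean-`0`,
variance-`1/F` entries, `h_v⁽⁰⁾ = X_v` and `h_v⁽ˡ⁺¹⁾ = ∑_{u ∈ N(v)} h_u⁽ˡ⁾`, for all vertices
`u, v` and all `p, q ∈ ℕ`,
`E[h_u⁽ᵖ⁾ ⬝ h_v⁽𐞥⁾] = ∑_{k ∈ V} |walks⁽ᵖ⁾(k,u)| · |walks⁽𐞥⁾(k,v)|`. -/
theorem multilayer_message_passing_expected_inner_product_eq_walk_counts
    {V : Type*} [Fintype V] [DecidableEq V]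
    (G : SimpleGraph V) [DecidableRel G.Adj]
    {Ω : Type*} [MeasureSpace Ω] [IsProbabilityMeasure (ℙ : Measure Ω)]
    (F : ℕ) (hF : 0 < F)
    (X : V → Fin F → Ω → ℝ)
    (hXmeas : ∀ k i, Measurable (X k i))
    -- the entries of `X` are jointly independent
    (hXindep : iIndepFun
      (fun (p : V × Fin F) ω => X p.1 p.2 ω) ℙ)
    -- and identically distributed
    (hXid : ∀ (p q : V × Fin F), IdentDistrib (X p.1 p.2) (X q.1 q.2) ℙ ℙ)
    -- with mean `0` and variance `1/F`
    (hXmean : ∀ k i, ∫ ω, X k i ω = 0)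
    (hXvar : ∀ k i, ∫ ω, (X k i ω) ^ 2 = 1 / F)
    -- the recursively defined multi-layer message passing
    (h : ℕ → V → Ω → Fin F → ℝ)
    (hh0 : ∀ w ω i, h 0 w ω i = X w i ω)
    (hhsucc : ∀ l w ω i, h (l + 1) w ω i = ∑ k ∈ G.neighborFinset w, h l k ω i)
    (u v : V) (p q : ℕ) :
    ∫ ω, ∑ i : Fin F, h p u ω i * h q v ω i =
      ∑ k : V, ((G.finsetWalkLength p k u).card : ℝ) *
        ((G.finsetWalkLength q k v).card : ℝ) := by
  -- the walk-count coefficients, as entries of powers of the adjacency matrix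
  set c : ℕ → V → V → ℝ := fun l k w => ((G.adjMatrix ℝ) ^ l) k w with hc
  -- representation of `h` as a linear combination of the `X`'s
  have hrep : ∀ l w ω i, h l w ω i = ∑ k : V, c l k w * X k i ω := by
    intro l
    induction l with
    | zero =>
      intro w ω i
      simp [hh0, hc, Matrix.one_apply]
    | succ l ih =>
      intro w ω i
      rw [hhsucc]
      simp only [ih]
      rw [Finset.sum_comm]
      refine Finset.sum_congr rfl fun k _ => ?_
      rw [← Finset.sum_mul]
      congr 1
      simp [hc, pow_succ]
  -- integrability facts
  have hXsqInt : ∀ k i, Integrable (fun ω => (X k i ω) ^ 2) := by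
    intro k i
    by_contra hcon
    have h0 : (0 : ℝ) = 1 / F := by rw [← hXvar k i, integral_undef hcon]
    have hFpos : (0 : ℝ) < F := by exact_mod_cast hF
    have : (0 : ℝ) < 1 / F := by positivity
    linarith
  have hprodInt : ∀ k i k' i', Integrable (fun ω => X k i ω * X k' i' ω) := by
    intro k i k' i'
    refine Integrable.mono' (((hXsqInt k i).add (hXsqInt k' i')).const_mul (1/2))
      ((hXmeas k i).mul (hXmeas k' i')).aestronglyMeasurable ?_
    filter_upwards with ω
    simp only [Real.norm_eq_abs, Pi.add_apply, abs_mul]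
    nlinarith [sq_nonneg (|X k i ω| - |X k' i' ω|), sq_abs (X k i ω), sq_abs (X k' i' ω),
      abs_nonneg (X k i ω), abs_nonneg (X k' i' ω)]
  -- second moments
  have hE : ∀ k k' (i : Fin F), ∫ ω, X k i ω * X k' i ω =
      if k = k' then 1 / (F : ℝ) else 0 := by
    intro k k' i
    by_cases hkk : k = k'
    · subst hkk
      simp only [if_true]
      rw [← hXvar k i]
      congr 1; ext ω; ring
    · simp only [hkk, if_false]
      have hne : ((k, i) : V × Fin F) ≠ (k', i) := by simp [hkk]
      have hind : IndepFun (X k i) (X k' i) ℙ := hXindep.indepFun hne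
      have := hind.integral_mul_eq_mul_integral (hXmeas k i).aestronglyMeasurable
        (hXmeas k' i).aestronglyMeasurable
      calc ∫ ω, X k i ω * X k' i ω = ∫ ω, (X k i * X k' i) ω := rfl
        _ = (∫ ω, X k i ω) * ∫ ω, X k' i ω := this
        _ = 0 := by rw [hXmean, zero_mul]
  -- expand everything
  simp only [hrep]
  have key : ∫ ω, ∑ i : Fin F, (∑ k : V, c p k u * X k i ω) * ∑ k : V, c q k v * X k i ω
      = ∑ i : Fin F, ∑ k : V, ∑ k' : V, c p k u * c q k' v * ∫ ω, X k i ω * X k' i ω := by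
    have hint : ∀ (i : Fin F) (k k' : V),
        Integrable (fun ω => c p k u * X k i ω * (c q k' v * X k' i ω)) := by
      intro i k k'
      have : (fun ω => c p k u * X k i ω * (c q k' v * X k' i ω))
          = fun ω => (c p k u * c q k' v) * (X k i ω * X k' i ω) := by ext ω; ring
      rw [this]
      exact (hprodInt k i k' i).const_mul _
    calc ∫ ω, ∑ i : Fin F, (∑ k : V, c p k u * X k i ω) * ∑ k : V, c q k v * X k i ω
        = ∫ ω, ∑ i : Fin F, ∑ k : V, ∑ k' : V, c p k u * X k i ω * (c q k' v * X k' i ω) := by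
          congr 1; ext ω
          refine Finset.sum_congr rfl fun i _ => ?_
          rw [Finset.sum_mul_sum]
      _ = ∑ i : Fin F, ∑ k : V, ∑ k' : V, ∫ ω, c p k u * X k i ω * (c q k' v * X k' i ω) := by
          rw [integral_finset_sum _ (fun i _ => integrable_finset_sum _ (fun k _ =>
            integrable_finset_sum _ (fun k' _ => hint i k k')))]
          refine Finset.sum_congr rfl fun i _ => ?_
          rw [integral_finset_sum _ (fun k _ => integrable_finset_sum _ (fun k' _ => hint i k k'))]
          refine Finset.sum_congr rfl fun k _ => ?_
          rw [integral_finset_sum _ (fun k' _ => hint i k k')]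
      _ = ∑ i : Fin F, ∑ k : V, ∑ k' : V, c p k u * c q k' v * ∫ ω, X k i ω * X k' i ω := by
          refine Finset.sum_congr rfl fun i _ => Finset.sum_congr rfl fun k _ =>
            Finset.sum_congr rfl fun k' _ => ?_
          rw [← MeasureTheory.integral_const_mul]
          congr 1; ext ω; ring
  rw [key]
  have : ∀ i : Fin F, ∑ k : V, ∑ k' : V, c p k u * c q k' v * ∫ ω, X k i ω * X k' i ω
      = ∑ k : V, c p k u * c q k v * (1 / F) := by
    intro i
    refine Finset.sum_congr rfl fun k _ => ?_
    rw [Finset.sum_eq_single k]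
    · rw [hE]; simp
    · intro k' _ hk'
      rw [hE]; simp [Ne.symm hk']
    · simp
  simp only [this, Finset.sum_const, Finset.card_univ, Fintype.card_fin, nsmul_eq_mul]
  rw [Finset.mul_sum]
  refine Finset.sum_congr rfl fun k _ => ?_
  have hcw : ∀ (l : ℕ) (a b : V), c l a b = ((G.finsetWalkLength l a b).card : ℝ) := by
    intro l a b
    show ((G.adjMatrix ℝ) ^ l) a b = _
    rw [SimpleGraph.adjMatrix_pow_apply_eq_card_walk, SimpleGraph.card_set_walk_length_eq]
  rw [hcw, hcw]
  have hFne : (F : ℝ) ≠ 0 := by exact_mod_cast hF.ne'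
  field_simp
end

section
/- Let G = (V,E) be a finite simple undirected graph in which every vertex has positive degree, and F ∈ ℕ₊. On a probability space, let X : V → ℝ^F be a random matrix whose entries X_{k,i} are jointly independent and identically distributed with mean 0 and variance 1/F. Define the rescaled vectors h̃_k = (1/√d_k) · X_k and the aggregates g_w = Σ_{k ∈ N(w)} h̃_k. Then for every pair of vertices (u, v) ∈ V × V, E[g_u · g_v] = RA(u,v) = Σ_{k ∈ N(u) ∩ N(v)} 1/d_k, the Resource Allocation index of (u,v). -/
open MeasureTheory ProbabilityTheory

/-- Resource Allocation estimator.  In a graph where every vertex has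
positive degree, with i.i.d. mean-`0`, variance-`1/F` entries, rescaled vectors
`h̃_k = (1/√d_k) • X_k` and aggregates `g_w = ∑_{k ∈ N(w)} h̃_k`, for every pair of vertices
`(u, v)`, `E[g_u ⬝ g_v] = RA(u,v) = ∑_{k ∈ N(u) ∩ N(v)} 1/d_k`. -/
theorem rescaled_message_passing_expected_inner_product_eq_resourceAllocation
    {V : Type*} [Fintype V] [DecidableEq V]
    (G : SimpleGraph V) [DecidableRel G.Adj]
    (hdeg : ∀ w : V, 0 < G.degree w)
    {Ω : Type*} [MeasureSpace Ω] [IsProbabilityMeasure (ℙ : Measure Ω)]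
    (F : ℕ) (hF : 0 < F)
    (X : V → Fin F → Ω → ℝ)
    (hXmeas : ∀ k i, Measurable (X k i))
    -- the entries of `X` are jointly independent
    (hXindep : iIndepFun
      (fun (p : V × Fin F) ω => X p.1 p.2 ω) ℙ)
    -- and identically distributed
    (hXid : ∀ (p q : V × Fin F), IdentDistrib (X p.1 p.2) (X q.1 q.2) ℙ ℙ)
    -- with mean `0` and variance `1/F`
    (hXmean : ∀ k i, ∫ ω, X k i ω = 0)
    (hXvar : ∀ k i, ∫ ω, (X k i ω) ^ 2 = 1 / F)
    -- rescaled vectors and aggregates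
    (htilde : V → Ω → Fin F → ℝ)
    (hht : ∀ k ω i, htilde k ω i = (1 / Real.sqrt (G.degree k)) * X k i ω)
    (g : V → Ω → Fin F → ℝ)
    (hg : ∀ w ω i, g w ω i = ∑ k ∈ G.neighborFinset w, htilde k ω i)
    (u v : V) :
    ∫ ω, ∑ i : Fin F, g u ω i * g v ω i =
      ∑ k ∈ G.neighborFinset u ∩ G.neighborFinset v, 1 / (G.degree k : ℝ) := by
  have hF0 : (0:ℝ) < F := by exact_mod_cast hF
  -- squares are integrable
  have hsq : ∀ k i, Integrable (fun ω => (X k i ω) ^ 2) ℙ := by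
    intro k i
    by_contra h
    have h0 := integral_undef h
    rw [hXvar k i] at h0
    have : (0:ℝ) < 1 / F := by positivity
    rw [h0] at this
    exact lt_irrefl _ this
  have hL2 : ∀ k i, MemLp (X k i) 2 ℙ := fun k i =>
    (memLp_two_iff_integrable_sq (hXmeas k i).aestronglyMeasurable).mpr (hsq k i)
  have hInt : ∀ k i, Integrable (X k i) ℙ := fun k i => (hL2 k i).integrable one_le_two
  have hindep : ∀ (k l : V) (i : Fin F), k ≠ l →
      IndepFun (X k i) (X l i) ℙ := by
    intro k l i hkl
    exact hXindep.indepFun (by simp [Prod.ext_iff, hkl] : ((k,i) : V × Fin F) ≠ (l,i))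
  have hmulInt : ∀ (k l : V) (i : Fin F),
      Integrable (fun ω => X k i ω * X l i ω) ℙ := by
    intro k l i
    by_cases hkl : k = l
    · subst hkl
      simpa [pow_two] using hsq k i
    · exact (hindep k l i hkl).integrable_mul (hInt k i) (hInt l i)
  have hterm : ∀ (k l : V) (i : Fin F),
      ∫ ω, X k i ω * X l i ω = if k = l then 1 / (F:ℝ) else 0 := by
    intro k l i
    by_cases hkl : k = l
    · subst hkl
      simp only [if_pos rfl]
      rw [← hXvar k i]
      congr 1; ext ω; ring
    · rw [if_neg hkl]
      have := (hindep k l i hkl).integral_mul_eq_mul_integral (hXmeas k i).aestronglyMeasurable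
        (hXmeas l i).aestronglyMeasurable
      calc ∫ ω, X k i ω * X l i ω = ∫ ω, (X k i * X l i) ω := rfl
        _ = (∫ ω, X k i ω) * ∫ ω, X l i ω := this
        _ = 0 := by rw [hXmean k i, hXmean l i]; ring
  set a : V → ℝ := fun k => 1 / Real.sqrt (G.degree k) with ha
  have hexpand : ∀ w w' ω i, g w ω i * g w' ω i =
      ∑ k ∈ G.neighborFinset w, ∑ l ∈ G.neighborFinset w',
        a k * a l * (X k i ω * X l i ω) := by
    intro w w' ω i
    rw [hg, hg, Finset.sum_mul_sum]
    refine Finset.sum_congr rfl fun k _ => Finset.sum_congr rfl fun l _ => ?_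
    rw [hht, hht]; ring
  have key : ∀ i : Fin F, ∫ ω, g u ω i * g v ω i =
      ∑ k ∈ G.neighborFinset u ∩ G.neighborFinset v, 1 / (G.degree k : ℝ) / F := by
    intro i
    simp only [hexpand]
    rw [integral_finset_sum _ (fun k _ => integrable_finset_sum _
      (fun l _ => ((hmulInt k l i).const_mul _)))]
    have step : ∀ k ∈ G.neighborFinset u,
        (∫ ω, ∑ l ∈ G.neighborFinset v, a k * a l * (X k i ω * X l i ω)) =
        if k ∈ G.neighborFinset v then 1 / (G.degree k : ℝ) / F else 0 := by
      intro k _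
      rw [integral_finset_sum _ (fun l _ => ((hmulInt k l i).const_mul _))]
      have : ∀ l ∈ G.neighborFinset v,
          (∫ ω, a k * a l * (X k i ω * X l i ω)) =
          if k = l then a k * a k * (1 / F) else 0 := by
        intro l _
        rw [integral_const_mul, hterm k l i]
        by_cases hkl : k = l
        · subst hkl; simp
        · simp [hkl]
      rw [Finset.sum_congr rfl this, Finset.sum_ite_eq (G.neighborFinset v) k
        (fun _ => a k * a k * (1 / F))]
      have hdk : (0:ℝ) < (G.degree k : ℝ) := by exact_mod_cast hdeg k
      have haa : a k * a k = 1 / (G.degree k : ℝ) := by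
        rw [ha]
        simp only [one_div, ← mul_inv]
        rw [Real.mul_self_sqrt hdk.le]
      by_cases hm : k ∈ G.neighborFinset v
      · rw [if_pos hm, if_pos hm, haa]; ring
      · rw [if_neg hm, if_neg hm]
    rw [Finset.sum_congr rfl step, Finset.sum_ite_mem]
  have hginteg : ∀ i : Fin F, Integrable (fun ω => g u ω i * g v ω i) ℙ := by
    intro i
    have : (fun ω => g u ω i * g v ω i) = fun ω =>
        ∑ k ∈ G.neighborFinset u, ∑ l ∈ G.neighborFinset v,
          a k * a l * (X k i ω * X l i ω) := by
      ext ω; exact hexpand u v ω i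
    rw [this]
    exact integrable_finset_sum _ (fun k _ => integrable_finset_sum _
      (fun l _ => ((hmulInt k l i).const_mul _)))
  rw [integral_finset_sum _ (fun i _ => hginteg i)]
  rw [Finset.sum_congr rfl (fun i _ => key i)]
  rw [Finset.sum_const, Finset.card_univ, Fintype.card_fin]
  rw [Finset.smul_sum]
  refine Finset.sum_congr rfl fun k _ => ?_
  field_simp
  have hdk : (0:ℝ) < (G.degree k : ℝ) := by exact_mod_cast hdeg k
  rw [nsmul_eq_mul, mul_one_div, div_eq_div_iff (by positivity) (by positivity)]
  ring
end

section
/- Let G = (V,E) be a finite simple undirected graph and F ∈ ℕ₊. On a probability space, let X : V → ℝ^F be a random matrix whose entries X_{k,i} are jointly independent and uniformly distributed on the two-point set {−1/√F, +1/√F}. For each vertex w define h_w = Σ_{k ∈ N(w)} X_k. Then for every pair of vertices (u, v) ∈ V × V, Var(h_u · h_v) = (1/F)(d_u d_v + CN(u,v)² − 2·CN(u,v)). -/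
open MeasureTheory ProbabilityTheory Finset
open scoped ENNReal

section Aux
variable {Ω : Type*} [MeasureSpace Ω] [IsProbabilityMeasure (ℙ : Measure Ω)]

lemma aux_integrable_of_bound {f : Ω → ℝ} (hf : Measurable f) (C : ℝ)
    (hC : ∀ ω, |f ω| ≤ C) : Integrable f ℙ :=
  (memLp_top_of_bound hf.aestronglyMeasurable C
    (Filter.Eventually.of_forall fun ω => by
      simpa [Real.norm_eq_abs] using hC ω)).integrable le_top

lemma aux_mean_zero {f : Ω → ℝ} (hf : Measurable f) {c : ℝ} (hc : 0 < c)
    (hval : ∀ ω, f ω = c ∨ f ω = -c) (hunif : ℙ {ω | f ω = c} = 1 / 2) :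
    ∫ ω, f ω = 0 := by
  set A : Set Ω := f ⁻¹' {c} with hA
  have hAm : MeasurableSet A := hf (measurableSet_singleton c)
  have hAP : ℙ A = 1 / 2 := hunif
  have hAc : ℙ Aᶜ = 1 / 2 := by
    rw [measure_compl hAm (measure_ne_top _ _), measure_univ, hAP]
    exact ENNReal.sub_eq_of_eq_add (by norm_num) (ENNReal.add_halves 1).symm
  have hdecomp : f = fun ω => A.indicator (fun _ => c) ω + Aᶜ.indicator (fun _ => -c) ω := by
    funext ω
    by_cases hω : ω ∈ A
    · have hfω : f ω = c := hω
      simp [Set.indicator_of_mem hω, Set.indicator_of_notMem (show ω ∉ Aᶜ by simpa using hω),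
        hfω]
    · have hfω : f ω = -c := by
        rcases hval ω with h | h
        · exact absurd h hω
        · exact h
      simp [Set.indicator_of_notMem hω, Set.indicator_of_mem (show ω ∈ Aᶜ from hω), hfω]
  rw [hdecomp, integral_add ((integrable_const c).indicator hAm)
    ((integrable_const (-c)).indicator hAm.compl),
    integral_indicator_const _ hAm, integral_indicator_const _ hAm.compl, measureReal_def, measureReal_def, hAP, hAc]
  norm_num

variable {ι : Type*} [DecidableEq ι] {f : ι → Ω → ℝ}

lemma aux_prod2 (hindep : iIndepFun f ℙ)
    (hmeas : ∀ i, Measurable (f i)) (hbd : ∀ i ω, |f i ω| ≤ 1)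
    (hmean : ∀ i, ∫ ω, f i ω = 0) {p q : ι} (hpq : p ≠ q) :
    ∫ ω, f p ω * f q ω = 0 := by
  have h := (hindep.indepFun hpq).integral_mul_eq_mul_integral
    (aux_integrable_of_bound (hmeas p) 1 (hbd p)).aestronglyMeasurable (aux_integrable_of_bound (hmeas q) 1 (hbd q)).aestronglyMeasurable
  have h2 : ∫ ω, f p ω * f q ω = (∫ ω, f p ω) * ∫ ω, f q ω := h
  rw [h2, hmean p, zero_mul]

lemma aux_prod4 (hindep : iIndepFun f ℙ)
    (hmeas : ∀ i, Measurable (f i)) (hbd : ∀ i ω, |f i ω| ≤ 1)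
    (hmean : ∀ i, ∫ ω, f i ω = 0) {p q r s : ι}
    (hpq : p ≠ q) (hpr : p ≠ r) (hps : p ≠ s) (hqr : q ≠ r) (hqs : q ≠ s) (hrs : r ≠ s) :
    ∫ ω, f p ω * f q ω * f r ω * f s ω = 0 := by
  have hnot : p ∉ ({q, r, s} : Finset ι) := by simp [hpq, hpr, hps]
  have hind := hindep.indepFun_finsetProd_of_notMem hmeas hnot
  have hprod : (∏ j ∈ ({q, r, s} : Finset ι), f j) = fun ω => f q ω * f r ω * f s ω := by
    funext ω
    rw [Finset.prod_apply, Finset.prod_insert (by simp [hqr, hqs]),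
      Finset.prod_insert (by simp [hrs]), Finset.prod_singleton, mul_assoc]
  rw [hprod] at hind
  have hint3 : Integrable (fun ω => f q ω * f r ω * f s ω) ℙ := by
    refine aux_integrable_of_bound (((hmeas q).mul (hmeas r)).mul (hmeas s)) 1 fun ω => ?_
    calc |f q ω * f r ω * f s ω| = |f q ω| * |f r ω| * |f s ω| := by rw [abs_mul, abs_mul]
      _ ≤ 1 * 1 * 1 := by gcongr <;> first | exact abs_nonneg _ | exact hbd _ ω
      _ = 1 := by norm_num
  have h := hind.integral_mul_eq_mul_integral hint3.aestronglyMeasurable (aux_integrable_of_bound (hmeas p) 1 (hbd p)).aestronglyMeasurable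
  have h2 : ∫ ω, (f q ω * f r ω * f s ω) * f p ω
      = (∫ ω, f q ω * f r ω * f s ω) * ∫ ω, f p ω := h
  have h3 : (fun ω => f p ω * f q ω * f r ω * f s ω)
      = fun ω => (f q ω * f r ω * f s ω) * f p ω := by funext ω; ring
  rw [h3, h2, hmean p, mul_zero]

lemma aux_ite_or_add {P Q : Prop} [Decidable P] [Decidable Q] (h : ¬(P ∧ Q)) (q : ℝ) :
    (if P ∨ Q then q else 0) = (if P then q else 0) + (if Q then q else 0) := by
  by_cases hP : P <;> by_cases hQ : Q <;> simp [hP, hQ]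
  exact absurd ⟨hP, hQ⟩ h

end Aux

/-- variance for hypercube-sampled signatures.  If the entries of the
random vectors `X_k ∈ ℝ^F` are jointly independent and uniformly distributed on
`{−1/√F, +1/√F}`, and `h_w = ∑_{k ∈ N(w)} X_k`, then for every pair of vertices `(u, v)`,
`Var(h_u ⬝ h_v) = (1/F)(d_u d_v + CN(u,v)² − 2 CN(u,v))`. -/
theorem hypercube_message_passing_variance
    {V : Type*} [Fintype V] [DecidableEq V]
    (G : SimpleGraph V) [DecidableRel G.Adj]
    {Ω : Type*} [MeasureSpace Ω] [IsProbabilityMeasure (ℙ : Measure Ω)]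
    (F : ℕ) (hF : 0 < F)
    (X : V → Fin F → Ω → ℝ)
    (hXmeas : ∀ k i, Measurable (X k i))
    -- the entries of `X` are jointly independent
    (hXindep : iIndepFun
      (fun (p : V × Fin F) ω => X p.1 p.2 ω) ℙ)
    -- each entry is uniformly distributed on the two-point set `{−1/√F, +1/√F}`
    (hXvalues : ∀ k i ω, X k i ω = 1 / Real.sqrt F ∨ X k i ω = -(1 / Real.sqrt F))
    (hXunif : ∀ k i, ℙ {ω | X k i ω = 1 / Real.sqrt F} = 1 / 2)
    -- `h_w = ∑_{k ∈ N(w)} X_k`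
    (h : V → Ω → Fin F → ℝ)
    (hh : ∀ w ω i, h w ω i = ∑ k ∈ G.neighborFinset w, X k i ω)
    (u v : V) :
    variance (fun ω => ∑ i : Fin F, h u ω i * h v ω i) ℙ =
      (1 / F) * ((G.degree u : ℝ) * (G.degree v : ℝ)
        + ((G.neighborFinset u ∩ G.neighborFinset v).card : ℝ) ^ 2
        - 2 * ((G.neighborFinset u ∩ G.neighborFinset v).card : ℝ)) := by
  -- basic numerics
  have hF0 : (0:ℝ) < (F:ℝ) := by exact_mod_cast hF
  have hFne : (F:ℝ) ≠ 0 := ne_of_gt hF0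
  set c : ℝ := 1 / Real.sqrt F with hc
  have hsqrt : (0:ℝ) < Real.sqrt F := Real.sqrt_pos.mpr hF0
  have hcpos : 0 < c := by rw [hc]; positivity
  have hc2 : c * c = 1 / (F:ℝ) := by
    rw [hc, div_mul_div_comm, one_mul, Real.mul_self_sqrt hF0.le]
  have hsq : ∀ k i ω, X k i ω * X k i ω = 1 / (F:ℝ) := by
    intro k i ω
    rcases hXvalues k i ω with hv | hv <;> rw [hv]
    · exact hc2
    · rw [neg_mul_neg]; exact hc2
  have hble : ∀ k i ω, |X k i ω| ≤ 1 := by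
    intro k i ω
    have h1 : (1:ℝ) ≤ Real.sqrt F := by
      rw [show (1:ℝ) = Real.sqrt 1 from Real.sqrt_one.symm]
      exact Real.sqrt_le_sqrt (by exact_mod_cast hF)
    have hcle : c ≤ 1 := by rw [hc, div_le_one hsqrt]; exact h1
    rcases hXvalues k i ω with hv | hv <;> rw [hv]
    · rw [abs_of_pos hcpos]; exact hcle
    · rw [abs_neg, abs_of_pos hcpos]; exact hcle
  have hmean : ∀ (p : V × Fin F), ∫ ω, X p.1 p.2 ω = 0 := fun p =>
    aux_mean_zero (hXmeas p.1 p.2) hcpos (hXvalues p.1 p.2) (hXunif p.1 p.2)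
  have hmul2 : ∀ (p q : V × Fin F), p ≠ q → ∫ ω, X p.1 p.2 ω * X q.1 q.2 ω = 0 :=
    fun p q hpq => aux_prod2 hXindep (fun p => hXmeas p.1 p.2)
      (fun p ω => hble p.1 p.2 ω) hmean hpq
  have hmul4 : ∀ (p q r s : V × Fin F), p ≠ q → p ≠ r → p ≠ s → q ≠ r → q ≠ s → r ≠ s →
      ∫ ω, X p.1 p.2 ω * X q.1 q.2 ω * X r.1 r.2 ω * X s.1 s.2 ω = 0 :=
    fun p q r s h1 h2 h3 h4 h5 h6 => aux_prod4 hXindep (fun p => hXmeas p.1 p.2)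
      (fun p ω => hble p.1 p.2 ω) hmean h1 h2 h3 h4 h5 h6
  -- the key fourth-moment computation
  have key : ∀ (i j : Fin F) (k l k' l' : V),
      ∫ ω, (X k i ω * X l i ω) * (X k' j ω * X l' j ω) =
        (if k = l then (1:ℝ) else 0) * (if k' = l' then (1:ℝ) else 0) * (1/(F:ℝ)^2)
        + (if (i = j ∧ k ≠ l ∧ ((k' = k ∧ l' = l) ∨ (k' = l ∧ l' = k)))
            then (1/(F:ℝ)^2) else 0) := by
    have hFF : (1/(F:ℝ)) * (1/(F:ℝ)) = 1/(F:ℝ)^2 := by rw [sq]; ring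
    intro i j k l k' l'
    by_cases hkl : k = l
    · by_cases hkl' : k' = l'
      · have hfun : (fun ω => (X k i ω * X l i ω) * (X k' j ω * X l' j ω))
            = fun _ => 1/(F:ℝ)^2 := by
          funext ω; rw [hkl, hkl', hsq, hsq, hFF]
        rw [hfun, integral_const]
        have hcond : ¬(i = j ∧ k ≠ l ∧ ((k' = k ∧ l' = l) ∨ (k' = l ∧ l' = k))) :=
          fun hx => hx.2.1 hkl
        rw [if_neg hcond, if_pos hkl, if_pos hkl']
        simp
      · have hfun : (fun ω => (X k i ω * X l i ω) * (X k' j ω * X l' j ω))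
            = fun ω => (1/(F:ℝ)) * (X k' j ω * X l' j ω) := by
          funext ω; rw [hkl, hsq]
        rw [hfun, integral_const_mul,
          hmul2 (k', j) (l', j) (by simp [hkl']), mul_zero]
        have hcond : ¬(i = j ∧ k ≠ l ∧ ((k' = k ∧ l' = l) ∨ (k' = l ∧ l' = k))) :=
          fun hx => hx.2.1 hkl
        rw [if_neg hcond, if_neg hkl']
        ring
    · by_cases hkl' : k' = l'
      · have hfun : (fun ω => (X k i ω * X l i ω) * (X k' j ω * X l' j ω))
            = fun ω => (1/(F:ℝ)) * (X k i ω * X l i ω) := by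
          funext ω
          rw [hkl', show (X k i ω * X l i ω) * (X l' j ω * X l' j ω)
              = (X l' j ω * X l' j ω) * (X k i ω * X l i ω) from by ring, hsq]
        rw [hfun, integral_const_mul, hmul2 (k, i) (l, i) (by simp [hkl]), mul_zero]
        have hcond : ¬(i = j ∧ k ≠ l ∧ ((k' = k ∧ l' = l) ∨ (k' = l ∧ l' = k))) := by
          rintro ⟨-, hne, (⟨h1, h2⟩ | ⟨h1, h2⟩)⟩
          · exact hne ((h1.symm.trans hkl').trans h2)
          · exact hne ((h2.symm.trans hkl'.symm).trans h1)
        rw [if_neg hcond, if_neg hkl]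
        ring
      · by_cases hij : i = j
        · subst hij
          by_cases h1 : k' = k
          · by_cases h2 : l' = l
            · have hfun : (fun ω => (X k i ω * X l i ω) * (X k' i ω * X l' i ω))
                  = fun _ => 1/(F:ℝ)^2 := by
                funext ω
                rw [h1, h2, show (X k i ω * X l i ω) * (X k i ω * X l i ω)
                    = (X k i ω * X k i ω) * (X l i ω * X l i ω) from by ring, hsq, hsq, hFF]
              rw [hfun, integral_const, if_neg hkl,
                if_pos (show (i = i ∧ k ≠ l ∧ ((k' = k ∧ l' = l) ∨ (k' = l ∧ l' = k)))
                  from ⟨rfl, hkl, Or.inl ⟨h1, h2⟩⟩)]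
              simp
            · have hfun : (fun ω => (X k i ω * X l i ω) * (X k' i ω * X l' i ω))
                  = fun ω => (1/(F:ℝ)) * (X l i ω * X l' i ω) := by
                funext ω
                rw [h1, show (X k i ω * X l i ω) * (X k i ω * X l' i ω)
                    = (X k i ω * X k i ω) * (X l i ω * X l' i ω) from by ring, hsq]
              have hll' : l ≠ l' := fun he => h2 he.symm
              rw [hfun, integral_const_mul, hmul2 (l, i) (l', i) (by simp [hll']), mul_zero]
              have hcond : ¬(i = i ∧ k ≠ l ∧ ((k' = k ∧ l' = l) ∨ (k' = l ∧ l' = k))) := by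
                rintro ⟨-, hne, (⟨-, hx⟩ | ⟨hx, -⟩)⟩
                · exact h2 hx
                · exact hne (h1.symm.trans hx)
              rw [if_neg hcond, if_neg hkl]
              ring
          · by_cases h2 : k' = l
            · by_cases h3 : l' = k
              · have hfun : (fun ω => (X k i ω * X l i ω) * (X k' i ω * X l' i ω))
                    = fun _ => 1/(F:ℝ)^2 := by
                  funext ω
                  rw [h2, h3, show (X k i ω * X l i ω) * (X l i ω * X k i ω)
                      = (X k i ω * X k i ω) * (X l i ω * X l i ω) from by ring, hsq, hsq, hFF]
                rw [hfun, integral_const, if_neg hkl,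
                  if_pos (show (i = i ∧ k ≠ l ∧ ((k' = k ∧ l' = l) ∨ (k' = l ∧ l' = k)))
                    from ⟨rfl, hkl, Or.inr ⟨h2, h3⟩⟩)]
                simp
              · have hfun : (fun ω => (X k i ω * X l i ω) * (X k' i ω * X l' i ω))
                    = fun ω => (1/(F:ℝ)) * (X k i ω * X l' i ω) := by
                  funext ω
                  rw [h2, show (X k i ω * X l i ω) * (X l i ω * X l' i ω)
                      = (X l i ω * X l i ω) * (X k i ω * X l' i ω) from by ring, hsq]
                have hkl'2 : k ≠ l' := fun he => h3 he.symm
                rw [hfun, integral_const_mul, hmul2 (k, i) (l', i) (by simp [hkl'2]), mul_zero]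
                have hcond : ¬(i = i ∧ k ≠ l ∧ ((k' = k ∧ l' = l) ∨ (k' = l ∧ l' = k))) := by
                  rintro ⟨-, hne, (⟨hx, -⟩ | ⟨-, hx⟩)⟩
                  · exact hne ((h2.symm.trans hx).symm)
                  · exact h3 hx
                rw [if_neg hcond, if_neg hkl]
                ring
            · by_cases h3 : l' = k
              · have hfun : (fun ω => (X k i ω * X l i ω) * (X k' i ω * X l' i ω))
                    = fun ω => (1/(F:ℝ)) * (X l i ω * X k' i ω) := by
                  funext ω
                  rw [h3, show (X k i ω * X l i ω) * (X k' i ω * X k i ω)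
                      = (X k i ω * X k i ω) * (X l i ω * X k' i ω) from by ring, hsq]
                have hlk' : l ≠ k' := fun he => h2 he.symm
                rw [hfun, integral_const_mul, hmul2 (l, i) (k', i) (by simp [hlk']), mul_zero]
                have hcond : ¬(i = i ∧ k ≠ l ∧ ((k' = k ∧ l' = l) ∨ (k' = l ∧ l' = k))) := by
                  rintro ⟨-, hne, (⟨hx, -⟩ | ⟨hx, -⟩)⟩
                  · exact h1 hx
                  · exact h2 hx
                rw [if_neg hcond, if_neg hkl]
                ring
              · by_cases h4 : l' = l
                · have hfun : (fun ω => (X k i ω * X l i ω) * (X k' i ω * X l' i ω))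
                      = fun ω => (1/(F:ℝ)) * (X k i ω * X k' i ω) := by
                    funext ω
                    rw [h4, show (X k i ω * X l i ω) * (X k' i ω * X l i ω)
                        = (X l i ω * X l i ω) * (X k i ω * X k' i ω) from by ring, hsq]
                  have hkk' : k ≠ k' := fun he => h1 he.symm
                  rw [hfun, integral_const_mul, hmul2 (k, i) (k', i) (by simp [hkk']), mul_zero]
                  have hcond : ¬(i = i ∧ k ≠ l ∧ ((k' = k ∧ l' = l) ∨ (k' = l ∧ l' = k))) := by
                    rintro ⟨-, hne, (⟨hx, -⟩ | ⟨hx, -⟩)⟩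
                    · exact h1 hx
                    · exact h2 hx
                  rw [if_neg hcond, if_neg hkl]
                  ring
                · have hkk' : k ≠ k' := fun he => h1 he.symm
                  have hkl'2 : k ≠ l' := fun he => h3 he.symm
                  have hlk' : l ≠ k' := fun he => h2 he.symm
                  have hll' : l ≠ l' := fun he => h4 he.symm
                  have h0 := hmul4 (k, i) (l, i) (k', i) (l', i)
                    (by simp [hkl]) (by simp [hkk']) (by simp [hkl'2])
                    (by simp [hlk']) (by simp [hll']) (by simp [hkl'])
                  have hfun : (fun ω => (X k i ω * X l i ω) * (X k' i ω * X l' i ω))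
                      = fun ω => X k i ω * X l i ω * X k' i ω * X l' i ω := by
                    funext ω; ring
                  rw [hfun, h0]
                  have hcond : ¬(i = i ∧ k ≠ l ∧ ((k' = k ∧ l' = l) ∨ (k' = l ∧ l' = k))) := by
                    rintro ⟨-, -, (⟨hx, -⟩ | ⟨hx, -⟩)⟩
                    · exact h1 hx
                    · exact h2 hx
                  rw [if_neg hcond, if_neg hkl]
                  ring
        · have h0 := hmul4 (k, i) (l, i) (k', j) (l', j)
            (by simp [hkl]) (by simp [hij]) (by simp [hij])
            (by simp [hij]) (by simp [hij]) (by simp [hkl'])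
          have hfun : (fun ω => (X k i ω * X l i ω) * (X k' j ω * X l' j ω))
              = fun ω => X k i ω * X l i ω * X k' j ω * X l' j ω := by
            funext ω; ring
          rw [hfun, h0]
          have hcond : ¬(i = j ∧ k ≠ l ∧ ((k' = k ∧ l' = l) ∨ (k' = l ∧ l' = k))) :=
            fun hx => hij hx.1
          rw [if_neg hcond, if_neg hkl]
          ring
  -- set up notation
  set Nu := G.neighborFinset u with hNuDef
  set Nv := G.neighborFinset v with hNvDef
  set m := Nu ∩ Nv with hmDef
  set CN : ℝ := (m.card : ℝ) with hCNDef
  set S : Finset (Fin F × V × V) := Finset.univ ×ˢ Nu ×ˢ Nv with hSDef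
  set g : Fin F × V × V → Ω → ℝ := fun a ω => X a.2.1 a.1 ω * X a.2.2 a.1 ω with hgDef
  set T : Ω → ℝ := fun ω => ∑ a ∈ S, g a ω with hTDef
  have hgmeas : ∀ a, Measurable (g a) := fun a => (hXmeas _ _).mul (hXmeas _ _)
  have hgbd : ∀ a ω, |g a ω| ≤ 1 := by
    intro a ω
    rw [hgDef]
    calc |X a.2.1 a.1 ω * X a.2.2 a.1 ω| = |X a.2.1 a.1 ω| * |X a.2.2 a.1 ω| := abs_mul _ _
      _ ≤ 1 * 1 := by gcongr <;> first | exact abs_nonneg _ | exact hble _ _ ω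
      _ = 1 := by norm_num
  have hgint : ∀ a, Integrable (g a) ℙ := fun a =>
    aux_integrable_of_bound (hgmeas a) 1 (hgbd a)
  have hggint : ∀ a b, Integrable (fun ω => g a ω * g b ω) ℙ := by
    intro a b
    refine aux_integrable_of_bound ((hgmeas a).mul (hgmeas b)) 1 fun ω => ?_
    calc |g a ω * g b ω| = |g a ω| * |g b ω| := abs_mul _ _
      _ ≤ 1 * 1 := by gcongr <;> first | exact abs_nonneg _ | exact hgbd _ ω
      _ = 1 := by norm_num
  -- identify the target function with T
  have hTfun : (fun ω => ∑ i : Fin F, h u ω i * h v ω i) = T := by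
    funext ω
    simp only [hTDef, hSDef, hgDef, Finset.sum_product]
    refine Finset.sum_congr rfl fun i _ => ?_
    rw [hh, hh, Finset.sum_mul_sum]
  -- Memℒp
  have hTmeas : Measurable T := by
    rw [hTDef]; exact Finset.measurable_sum S (fun a _ => hgmeas a)
  have hTL2 : MemLp T 2 ℙ := by
    refine (memLp_top_of_bound hTmeas.aestronglyMeasurable (S.card : ℝ)
      (Filter.Eventually.of_forall fun ω => ?_)).mono_exponent le_top
    rw [Real.norm_eq_abs, hTDef]
    calc |∑ a ∈ S, g a ω| ≤ ∑ a ∈ S, |g a ω| := Finset.abs_sum_le_sum_abs _ _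
      _ ≤ ∑ a ∈ S, 1 := Finset.sum_le_sum (fun a _ => hgbd a ω)
      _ = (S.card : ℝ) := by simp
  -- first moment
  have hcount1 : ∀ (r : ℝ), ∑ p ∈ Nu ×ˢ Nv, (if p.1 = p.2 then r else 0) = CN * r := by
    intro r
    rw [Finset.sum_product]
    dsimp only
    have h1 : ∀ k ∈ Nu, (∑ l ∈ Nv, if k = l then r else 0) = if k ∈ Nv then r else 0 :=
      fun k _ => Finset.sum_ite_eq Nv k (fun _ => r)
    rw [Finset.sum_congr rfl h1, ← Finset.sum_filter, Finset.filter_mem_eq_inter, ← hmDef,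
      Finset.sum_const, nsmul_eq_mul, hCNDef]
  have hE1 : ∫ ω, T ω = CN := by
    have h0 : ∫ ω, T ω = ∑ a ∈ S, ∫ ω, g a ω := by
      rw [hTDef]
      exact integral_finset_sum S (fun a _ => hgint a)
    have h1 : ∀ a ∈ S, ∫ ω, g a ω = if a.2.1 = a.2.2 then (1/(F:ℝ)) else 0 := by
      intro a _
      by_cases hkl : a.2.1 = a.2.2
      · rw [if_pos hkl]
        have hfun : g a = fun _ => (1/(F:ℝ)) := by
          funext ω
          simp only [hgDef]
          rw [hkl]
          exact hsq a.2.2 a.1 ω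
        rw [hfun, integral_const]
        simp
      · rw [if_neg hkl]
        have hfun : g a = fun ω => X a.2.1 a.1 ω * X a.2.2 a.1 ω := by
          funext ω; simp only [hgDef]
        rw [hfun]
        exact hmul2 (a.2.1, a.1) (a.2.2, a.1) (by simp [hkl])
    rw [h0, Finset.sum_congr rfl h1, hSDef, Finset.sum_product]
    rw [Finset.sum_congr rfl (fun (i : Fin F) _ => hcount1 (1/(F:ℝ)))]
    rw [Finset.sum_const, Finset.card_univ, Fintype.card_fin, nsmul_eq_mul]
    field_simp
  have hE2 : ∫ ω, (T ^ 2) ω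
      = CN^2 + (1/(F:ℝ)) * (((Nu.card:ℝ)*(Nv.card:ℝ) - CN) + (CN^2 - CN)) := by
    have hT2 : (T ^ 2 : Ω → ℝ) = fun ω => ∑ a ∈ S, ∑ b ∈ S, g a ω * g b ω := by
      funext ω
      show T ω ^ 2 = _
      rw [sq, hTDef]
      exact Finset.sum_mul_sum S S _ _
    rw [hT2, integral_finset_sum S (fun a _ => integrable_finset_sum S (fun b _ => hggint a b))]
    have hsplit : ∀ a ∈ S, ∫ ω, ∑ b ∈ S, g a ω * g b ω = ∑ b ∈ S, ∫ ω, g a ω * g b ω :=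
      fun a _ => integral_finset_sum S (fun b _ => hggint a b)
    rw [Finset.sum_congr rfl hsplit]
    have hval : ∀ a b : Fin F × V × V, ∫ ω, g a ω * g b ω =
        (if a.2.1 = a.2.2 then (1:ℝ) else 0) * (if b.2.1 = b.2.2 then (1:ℝ) else 0) * (1/(F:ℝ)^2)
        + (if (a.1 = b.1 ∧ a.2.1 ≠ a.2.2 ∧ ((b.2.1 = a.2.1 ∧ b.2.2 = a.2.2)
            ∨ (b.2.1 = a.2.2 ∧ b.2.2 = a.2.1))) then (1/(F:ℝ)^2) else 0) := by
      intro a b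
      have hfun : (fun ω => g a ω * g b ω)
          = fun ω => (X a.2.1 a.1 ω * X a.2.2 a.1 ω) * (X b.2.1 b.1 ω * X b.2.2 b.1 ω) := by
        funext ω; simp only [hgDef]
      rw [hfun]
      exact key a.1 b.1 a.2.1 a.2.2 b.2.1 b.2.2
    simp only [hval]
    rw [Finset.sum_congr rfl (fun (a : Fin F × V × V) _ => Finset.sum_add_distrib),
      Finset.sum_add_distrib]
    -- the diagonal count
    have hsumdiag : ∑ a ∈ S, (if a.2.1 = a.2.2 then (1:ℝ) else 0) = (F:ℝ) * CN := by
      rw [hSDef, Finset.sum_product]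
      rw [Finset.sum_congr rfl (fun (i : Fin F) _ => hcount1 1)]
      rw [Finset.sum_const, Finset.card_univ, Fintype.card_fin, nsmul_eq_mul, mul_one]
    -- part A
    have hAsum : ∑ a ∈ S, ∑ b ∈ S, ((if a.2.1 = a.2.2 then (1:ℝ) else 0)
        * (if b.2.1 = b.2.2 then (1:ℝ) else 0) * (1/(F:ℝ)^2)) = CN^2 := by
      have e1 : ∀ a : Fin F × V × V, ∑ b ∈ S, ((if a.2.1 = a.2.2 then (1:ℝ) else 0)
          * (if b.2.1 = b.2.2 then (1:ℝ) else 0) * (1/(F:ℝ)^2))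
          = ((if a.2.1 = a.2.2 then (1:ℝ) else 0) * (1/(F:ℝ)^2)) * ((F:ℝ) * CN) := by
        intro a
        rw [show (∑ b ∈ S, ((if a.2.1 = a.2.2 then (1:ℝ) else 0)
            * (if b.2.1 = b.2.2 then (1:ℝ) else 0) * (1/(F:ℝ)^2)))
            = ∑ b ∈ S, ((if a.2.1 = a.2.2 then (1:ℝ) else 0) * (1/(F:ℝ)^2))
              * (if b.2.1 = b.2.2 then (1:ℝ) else 0) from
          Finset.sum_congr rfl (fun b _ => by ring)]
        rw [← Finset.mul_sum, hsumdiag]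
      rw [Finset.sum_congr rfl (fun a _ => e1 a)]
      rw [show (∑ a ∈ S, ((if a.2.1 = a.2.2 then (1:ℝ) else 0) * (1/(F:ℝ)^2)) * ((F:ℝ) * CN))
          = ∑ a ∈ S, ((1/(F:ℝ)^2) * ((F:ℝ) * CN)) * (if a.2.1 = a.2.2 then (1:ℝ) else 0) from
        Finset.sum_congr rfl (fun a _ => by ring)]
      rw [← Finset.mul_sum, hsumdiag]
      field_simp
    -- part B : inner sum
    have hBin : ∀ a ∈ S, (∑ b ∈ S, if (a.1 = b.1 ∧ a.2.1 ≠ a.2.2 ∧ ((b.2.1 = a.2.1 ∧ b.2.2 = a.2.2)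
          ∨ (b.2.1 = a.2.2 ∧ b.2.2 = a.2.1))) then (1/(F:ℝ)^2) else 0)
        = (if a.2.1 ≠ a.2.2 then ((1/(F:ℝ)^2)
            + (if a.2.2 ∈ Nu ∧ a.2.1 ∈ Nv then (1/(F:ℝ)^2) else 0)) else 0) := by
      intro a ha
      have hamem : a.2.1 ∈ Nu ∧ a.2.2 ∈ Nv := by
        rw [hSDef] at ha
        simp only [Finset.mem_product, Finset.mem_univ, true_and] at ha
        exact ha
      by_cases hne : a.2.1 = a.2.2
      · rw [if_neg (by simp [hne])]
        refine Finset.sum_eq_zero fun b _ => ?_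
        rw [if_neg]
        rintro ⟨-, hx, -⟩
        exact hx hne
      · rw [if_pos hne, hSDef, Finset.sum_product]
        dsimp only
        rw [Finset.sum_comm]
        have e1 : ∀ p ∈ Nu ×ˢ Nv, (∑ j : Fin F, if (a.1 = j ∧ a.2.1 ≠ a.2.2
            ∧ ((p.1 = a.2.1 ∧ p.2 = a.2.2) ∨ (p.1 = a.2.2 ∧ p.2 = a.2.1)))
              then (1/(F:ℝ)^2) else 0)
            = (if ((p.1 = a.2.1 ∧ p.2 = a.2.2) ∨ (p.1 = a.2.2 ∧ p.2 = a.2.1))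
              then (1/(F:ℝ)^2) else 0) := by
          intro p _
          simp only [ite_and, Finset.sum_ite_eq, Finset.mem_univ, if_true]
          rw [if_pos hne]
        rw [Finset.sum_congr rfl e1]
        have e2 : ∀ p : V × V, (if ((p.1 = a.2.1 ∧ p.2 = a.2.2) ∨ (p.1 = a.2.2 ∧ p.2 = a.2.1))
            then (1/(F:ℝ)^2) else 0)
            = (if (p.1 = a.2.1 ∧ p.2 = a.2.2) then (1/(F:ℝ)^2) else 0)
              + (if (p.1 = a.2.2 ∧ p.2 = a.2.1) then (1/(F:ℝ)^2) else 0) :=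
          fun p => aux_ite_or_add (by rintro ⟨⟨h1, -⟩, ⟨h2, -⟩⟩; exact hne (h1.symm.trans h2)) _
        rw [Finset.sum_congr rfl (fun p _ => e2 p), Finset.sum_add_distrib]
        have hsum2 : ∀ (x y : V), (∑ p ∈ Nu ×ˢ Nv, if (p.1 = x ∧ p.2 = y)
            then (1/(F:ℝ)^2) else 0) = if (x ∈ Nu ∧ y ∈ Nv) then (1/(F:ℝ)^2) else 0 := by
          intro x y
          rw [Finset.sum_product]
          dsimp only
          have e3 : ∀ k' ∈ Nu, (∑ l' ∈ Nv, if (k' = x ∧ l' = y) then (1/(F:ℝ)^2) else 0)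
              = if k' = x then (if y ∈ Nv then (1/(F:ℝ)^2) else 0) else 0 := by
            intro k' _
            by_cases hk : k' = x
            · simp only [hk, true_and, if_true]
              exact Finset.sum_ite_eq' Nv y (fun _ => (1/(F:ℝ)^2))
            · simp [hk]
          rw [Finset.sum_congr rfl e3, Finset.sum_ite_eq' Nu x
            (fun _ => if y ∈ Nv then (1/(F:ℝ)^2) else 0), ite_and]
        rw [hsum2 a.2.1 a.2.2, hsum2 a.2.2 a.2.1, if_pos hamem]
    rw [Finset.sum_congr rfl hBin]
    -- part B : outer sum
    have hBout : ∑ a ∈ S, (if a.2.1 ≠ a.2.2 then ((1/(F:ℝ)^2)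
          + (if a.2.2 ∈ Nu ∧ a.2.1 ∈ Nv then (1/(F:ℝ)^2) else 0)) else 0)
        = (F:ℝ) * ((((Nu.card:ℝ)*(Nv.card:ℝ) - CN) + (CN^2 - CN)) * (1/(F:ℝ)^2)) := by
      rw [hSDef, Finset.sum_product]
      dsimp only
      have hW : ∀ p ∈ Nu ×ˢ Nv, (if p.1 ≠ p.2 then ((1/(F:ℝ)^2)
            + (if p.2 ∈ Nu ∧ p.1 ∈ Nv then (1/(F:ℝ)^2) else 0)) else 0)
          = (if p.1 ≠ p.2 then (1/(F:ℝ)^2) else 0)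
            + (if (p.1 ≠ p.2 ∧ p.2 ∈ Nu ∧ p.1 ∈ Nv) then (1/(F:ℝ)^2) else 0) := by
        intro p _
        by_cases h1 : p.1 = p.2 <;> by_cases h2 : p.2 ∈ Nu ∧ p.1 ∈ Nv <;> simp [h1, h2]
      have hc2' : ∑ p ∈ Nu ×ˢ Nv, (if p.1 ≠ p.2 then (1/(F:ℝ)^2) else 0)
          = ((Nu.card:ℝ)*(Nv.card:ℝ) - CN) * (1/(F:ℝ)^2) := by
        have e4 : ∀ p ∈ Nu ×ˢ Nv, (if p.1 ≠ p.2 then (1/(F:ℝ)^2) else 0)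
            = (1/(F:ℝ)^2) - (if p.1 = p.2 then (1/(F:ℝ)^2) else 0) := by
          intro p _
          by_cases hp : p.1 = p.2 <;> simp [hp]
        rw [Finset.sum_congr rfl e4, Finset.sum_sub_distrib, Finset.sum_const,
          hcount1, Finset.card_product, nsmul_eq_mul]
        push_cast
        ring
      have hc3 : ∑ p ∈ Nu ×ˢ Nv, (if (p.1 ≠ p.2 ∧ p.2 ∈ Nu ∧ p.1 ∈ Nv)
            then (1/(F:ℝ)^2) else 0)
          = (CN^2 - CN) * (1/(F:ℝ)^2) := by
        rw [← Finset.sum_filter]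
        have hfe : (Nu ×ˢ Nv).filter (fun p => p.1 ≠ p.2 ∧ p.2 ∈ Nu ∧ p.1 ∈ Nv) = m.offDiag := by
          ext p
          simp only [Finset.mem_filter, Finset.mem_product, Finset.mem_offDiag, hmDef,
            Finset.mem_inter]
          tauto
        rw [hfe, Finset.sum_const, Finset.offDiag_card, nsmul_eq_mul]
        have hle : m.card ≤ m.card * m.card := by
          rcases Nat.eq_zero_or_pos m.card with hz | hz
          · simp [hz]
          · exact Nat.le_mul_of_pos_left _ hz
        rw [Nat.cast_sub hle, Nat.cast_mul, ← hCNDef]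
        ring
      rw [Finset.sum_congr rfl (fun (i : Fin F) _ =>
        (Finset.sum_congr rfl (hW)).trans (by rw [Finset.sum_add_distrib, hc2', hc3]))]
      rw [Finset.sum_const, Finset.card_univ, Fintype.card_fin, nsmul_eq_mul]
      ring
    rw [hAsum, hBout]
    field_simp
  rw [hTfun, variance_eq_sub hTL2]
  have hgoal1 : ℙ[T ^ 2] = CN^2 + (1/(F:ℝ)) * (((Nu.card:ℝ)*(Nv.card:ℝ) - CN) + (CN^2 - CN)) :=
    hE2
  have hgoal2 : ℙ[T] = CN := hE1
  rw [hgoal1, hgoal2]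
  have hdu : (G.degree u : ℝ) = (Nu.card : ℝ) := by
    rw [hNuDef, G.card_neighborFinset_eq_degree]
  have hdv : (G.degree v : ℝ) = (Nv.card : ℝ) := by
    rw [hNvDef, G.card_neighborFinset_eq_degree]
  rw [hdu, hdv]
  ring
end
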